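/- arXiv:1009.4375 — 7 statements merged into one kernel-verified Lean document; each statement's English description precedes it below -/
import Mathlib

section
/- Let A be an n×n complex Hermitian matrix and let 0 < ℓ < L be reals. If a_{ii} ≥ L for all i and |a_{ij}| ≤ ℓ for all i ≠ j, then rank(A) ≥ n/(1 + n·(ℓ/L)²) ≥ n − (nℓ/L)². -/
open Matrix Finset

lemma trace_sq_le_rank_mul_frob {n : ℕ} (B : Matrix (Fin n) (Fin n) ℂ)
    (hB : B.IsHermitian) :
    B.trace.re ^ 2 ≤ (B.rank : ℝ) * ∑ i, ∑ j, ‖B i j‖ ^ 2 := by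
  classical
  set μ := hB.eigenvalues with hμ
  set U : Matrix (Fin n) (Fin n) ℂ := (hB.eigenvectorUnitary : Matrix (Fin n) (Fin n) ℂ) with hU
  have hUU : star U * U = 1 := (Matrix.mem_unitaryGroup_iff').mp hB.eigenvectorUnitary.2
  have hspec := hB.spectral_theorem
  simp only [Unitary.conjStarAlgAut_apply, Unitary.coe_star] at hspec
  -- trace = sum of eigenvalues
  have h1 : B.trace = ((∑ i, μ i : ℝ) : ℂ) := by
    conv_lhs => rw [hspec]
    rw [Matrix.trace_mul_comm, ← mul_assoc, hUU, one_mul, Matrix.trace_diagonal]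
    push_cast
    rfl
  -- trace (B*B) = sum of squares of eigenvalues
  have h2 : (B * B).trace = ((∑ i, μ i ^ 2 : ℝ) : ℂ) := by
    conv_lhs => rw [hspec]
    simp only [Matrix.mul_assoc]
    rw [← Matrix.mul_assoc (star U) U, hUU, Matrix.one_mul, Matrix.trace_mul_comm]
    simp only [Matrix.mul_assoc]
    rw [hUU, Matrix.mul_one, Matrix.diagonal_mul_diagonal, Matrix.trace_diagonal]
    push_cast
    simp [sq]
    rfl
  -- trace (B*B) = Frobenius norm squared
  have h3 : (B * B).trace = ((∑ i, ∑ j, ‖B i j‖ ^ 2 : ℝ) : ℂ) := by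
    rw [Matrix.trace]
    push_cast
    refine Finset.sum_congr rfl fun i _ => ?_
    rw [Matrix.diag_apply, Matrix.mul_apply]
    refine Finset.sum_congr rfl fun j _ => ?_
    rw [show B j i = (starRingEnd ℂ) (B i j) by
      rw [← hB.apply i j, starRingEnd_apply, star_star]]
    rw [Complex.mul_conj, ← Complex.sq_norm]
    norm_cast
  have h4 : ∑ i, ∑ j, ‖B i j‖ ^ 2 = ∑ i, μ i ^ 2 := by
    have := h3.symm.trans h2
    exact_mod_cast this
  rw [h4]
  have h5 : B.trace.re = ∑ i, μ i := by rw [h1]; exact Complex.ofReal_re _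
  rw [h5]
  -- Cauchy-Schwarz on nonzero eigenvalues
  have hrank : B.rank = (Finset.univ.filter (fun i => μ i ≠ 0)).card := by
    rw [hB.rank_eq_card_non_zero_eigs, Fintype.card_subtype]
  set s := Finset.univ.filter (fun i => μ i ≠ 0) with hs
  have hsum : ∑ i ∈ s, μ i = ∑ i, μ i := Finset.sum_filter_ne_zero _
  calc (∑ i, μ i) ^ 2 = (∑ i ∈ s, μ i) ^ 2 := by rw [hsum]
    _ ≤ s.card * ∑ i ∈ s, μ i ^ 2 := sq_sum_le_card_mul_sum_sq
    _ ≤ (B.rank : ℝ) * ∑ i, μ i ^ 2 := by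
        rw [hrank]
        exact mul_le_mul_of_nonneg_left
          (Finset.sum_le_sum_of_subset_of_nonneg (Finset.filter_subset _ _)
            (fun i _ _ => sq_nonneg _)) (Nat.cast_nonneg _)

/-- If an `n × n` complex Hermitian matrix has diagonal entries at least `L`
and off-diagonal entries of absolute value at most `ℓ` (with `0 < ℓ < L`), then
`rank(A) ≥ n / (1 + n (ℓ/L)²) ≥ n - (n ℓ / L)²`. -/
theorem hermitian_diag_dominant_rank {n : ℕ} (A : Matrix (Fin n) (Fin n) ℂ)
    (hA : A.IsHermitian) (ℓ L : ℝ) (hℓ : 0 < ℓ) (hL : ℓ < L)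
    (hdiag : ∀ i, L ≤ (A i i).re)
    (hoff : ∀ i j, i ≠ j → ‖A i j‖ ≤ ℓ) :
    (n : ℝ) - ((n : ℝ) * ℓ / L) ^ 2 ≤ (n : ℝ) / (1 + (n : ℝ) * (ℓ / L) ^ 2) ∧
      (n : ℝ) / (1 + (n : ℝ) * (ℓ / L) ^ 2) ≤ (A.rank : ℝ) := by
  classical
  have hL0 : 0 < L := hℓ.trans hL
  constructor
  · -- pure algebra
    set x := ℓ / L with hx
    have hx0 : 0 < x := div_pos hℓ hL0
    rw [mul_div_assoc, ← hx, le_div_iff₀ (by positivity)]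
    nlinarith [sq_nonneg ((n : ℝ) * x), sq_nonneg x, Nat.cast_nonneg (α := ℝ) n,
      mul_nonneg (mul_nonneg (Nat.cast_nonneg (α := ℝ) n) (sq_nonneg ((n:ℝ)*x)))
        (sq_nonneg x)]
  · -- main inequality via scaled matrix
    set d : Fin n → ℝ := fun i => (A i i).re with hd
    have hd0 : ∀ i, 0 < d i := fun i => hL0.trans_le (hdiag i)
    set c : Fin n → ℝ := fun i => Real.sqrt (L / d i) with hc
    have hc0 : ∀ i, 0 < c i := fun i => Real.sqrt_pos.2 (div_pos hL0 (hd0 i))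
    have hc1 : ∀ i, c i ≤ 1 := fun i =>
      Real.sqrt_le_one.mpr (div_le_one_of_le₀ (hdiag i) (hd0 i).le)
    have hcc : ∀ i, c i * c i = L / d i := fun i =>
      Real.mul_self_sqrt (div_nonneg hL0.le (hd0 i).le)
    set D : Matrix (Fin n) (Fin n) ℂ := Matrix.diagonal (fun i => (c i : ℂ)) with hD
    set B : Matrix (Fin n) (Fin n) ℂ := D * A * D with hB
    have hBapp : ∀ i j, B i j = (c i : ℂ) * A i j * (c j : ℂ) := by
      intro i j
      rw [hB, hD, Matrix.mul_diagonal, Matrix.diagonal_mul]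
    have hAii : ∀ i, A i i = ((d i : ℝ) : ℂ) := by
      intro i
      exact ((Complex.conj_eq_iff_re).1 (hA.apply i i)).symm
    have hBii : ∀ i, B i i = ((L : ℝ) : ℂ) := by
      intro i
      rw [hBapp, hAii]
      push_cast
      rw [show (c i : ℂ) * (d i : ℂ) * (c i : ℂ) = ((c i * c i : ℝ) : ℂ) * (d i : ℂ) by
        push_cast; ring, hcc]
      rw [← Complex.ofReal_mul, div_mul_cancel₀ _ (hd0 i).ne']
    -- B is Hermitian
    have hDH : D.conjTranspose = D := by
      have hstar : (star fun i => ((c i : ℝ) : ℂ)) = fun i => ((c i : ℝ) : ℂ) := by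
        funext i
        simp [Complex.conj_ofReal]
      rw [hD, Matrix.diagonal_conjTranspose, hstar]
    have hBH : B.IsHermitian := by
      unfold Matrix.IsHermitian
      rw [hB, Matrix.conjTranspose_mul, Matrix.conjTranspose_mul, hDH, hA.eq, Matrix.mul_assoc]
    -- rank B ≤ rank A
    have hrank : B.rank ≤ A.rank :=
      le_trans (Matrix.rank_mul_le_left (D * A) D)
        (Matrix.rank_mul_le_right D A)
    -- trace of B
    have htr : B.trace.re = n * L := by
      rw [Matrix.trace]
      rw [Complex.re_sum]
      simp only [Matrix.diag_apply, hBii, Complex.ofReal_re]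
      rw [Finset.sum_const, Finset.card_univ, Fintype.card_fin, nsmul_eq_mul]
    -- Frobenius bound
    have hfrob : ∑ i, ∑ j, ‖B i j‖ ^ 2 ≤ n * L ^ 2 + n ^ 2 * ℓ ^ 2 := by
      have hbd : ∀ i j, ‖B i j‖ ^ 2 ≤ if i = j then L ^ 2 else ℓ ^ 2 := by
        intro i j
        split_ifs with h
        · subst h; rw [hBii]; simp [Complex.norm_real, abs_of_pos hL0]
        · have habs : ‖B i j‖ = c i * ‖A i j‖ * c j := by
            rw [hBapp]
            simp [norm_mul, Complex.norm_real, abs_of_pos (hc0 i), abs_of_pos (hc0 j)]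
          have h1 : ‖B i j‖ ≤ ℓ := by
            rw [habs]
            have := hoff i j h
            nlinarith [hc0 i, hc0 j, hc1 i, hc1 j, norm_nonneg (A i j),
              mul_le_mul (hc1 i) this (norm_nonneg _) zero_le_one,
              mul_nonneg (hc0 i).le (norm_nonneg (A i j))]
          have h2 : (0:ℝ) ≤ ‖B i j‖ := norm_nonneg _
          nlinarith
      calc ∑ i, ∑ j, ‖B i j‖ ^ 2
          ≤ ∑ i : Fin n, ∑ j : Fin n, (if i = j then L ^ 2 else ℓ ^ 2) := by
            exact Finset.sum_le_sum fun i _ => Finset.sum_le_sum fun j _ => hbd i j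
        _ = ∑ i : Fin n, (n * ℓ ^ 2 + (L ^ 2 - ℓ ^ 2)) := by
            refine Finset.sum_congr rfl fun i _ => ?_
            simp only [show ∀ j : Fin n, (if i = j then L ^ 2 else ℓ ^ 2)
                  = ℓ ^ 2 + (if i = j then L ^ 2 - ℓ ^ 2 else 0) from
                fun j => by split_ifs <;> ring]
            rw [Finset.sum_add_distrib, Finset.sum_const, Finset.card_univ, Fintype.card_fin,
              Finset.sum_ite_eq, if_pos (Finset.mem_univ i), nsmul_eq_mul]
        _ = n * (n * ℓ ^ 2 + (L ^ 2 - ℓ ^ 2)) := by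
            rw [Finset.sum_const, Finset.card_univ, Fintype.card_fin, nsmul_eq_mul]
        _ ≤ n * L ^ 2 + n ^ 2 * ℓ ^ 2 := by nlinarith [Nat.cast_nonneg (α := ℝ) n, sq_nonneg ℓ]
    -- assemble
    have key := trace_sq_le_rank_mul_frob B hBH
    rw [htr] at key
    have hrank' : (B.rank : ℝ) ≤ (A.rank : ℝ) := by exact_mod_cast hrank
    have hfnn : (0:ℝ) ≤ ∑ i, ∑ j, ‖B i j‖ ^ 2 :=
      Finset.sum_nonneg fun i _ => Finset.sum_nonneg fun j _ => sq_nonneg _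
    have key2 : ((n:ℝ) * L) ^ 2 ≤ (A.rank : ℝ) * (n * L ^ 2 + n ^ 2 * ℓ ^ 2) :=
      key.trans (mul_le_mul hrank' hfrob hfnn (Nat.cast_nonneg _))
    have key3 : (n:ℝ) * L ^ 2 ≤ (A.rank : ℝ) * (L ^ 2 + n * ℓ ^ 2) := by
      rcases Nat.eq_zero_or_pos n with h0 | hpos
      · subst h0; simp; positivity
      · have hn : (0:ℝ) < n := by exact_mod_cast hpos
        nlinarith [key2, hn, Nat.cast_nonneg (α := ℝ) A.rank]
    have heq : (1 + (n:ℝ) * (ℓ / L) ^ 2) = (L ^ 2 + n * ℓ ^ 2) / L ^ 2 := by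
      field_simp
    rw [heq, div_div_eq_mul_div, div_le_iff₀ (by positivity)]
    linarith [key3]
end

section
/- If an m×n matrix B (over any field) is a vertical concatenation (stacking of rows) of matrices each of which satisfies Property-S, then B satisfies Property-S. -/
def PropertyS {F : Type} [Field F] {α β : Type} [Fintype α] [Fintype β]
    (A : Matrix α β F) : Prop :=
  ∀ (R : Finset α) (C : Finset β), (∀ i ∈ R, ∀ j ∈ C, A i j = 0) →
    (R.card : ℝ) / (Fintype.card α) + (C.card : ℝ) / (Fintype.card β) ≤ 1

/-- A vertical concatenation (stacking of rows) of matrices each satisfying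
Property-S satisfies Property-S. -/
theorem propertyS_of_vertical_concat {F : Type} [Field F] {s n : ℕ} (m : Fin s → ℕ)
    (A : ∀ k : Fin s, Matrix (Fin (m k)) (Fin n) F)
    (hA : ∀ k, PropertyS (A k)) :
    PropertyS (Matrix.of fun (p : (k : Fin s) × Fin (m k)) (j : Fin n) => A p.1 p.2 j) := by
  intro R C hz
  simp only [Fintype.card_sigma, Fintype.card_fin]
  have hcn : (C.card : ℝ) / n ≤ 1 := by
    rcases Nat.eq_zero_or_pos n with h | h
    · subst h
      have : C = ∅ := Finset.eq_empty_of_isEmpty C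
      simp [this]
    · rw [div_le_one (by positivity)]
      exact_mod_cast (Finset.card_le_univ C).trans_eq (by simp)
  set Rk : ∀ k : Fin s, Finset (Fin (m k)) :=
    fun k => Finset.univ.filter (fun i => (⟨k, i⟩ : (k : Fin s) × Fin (m k)) ∈ R) with hRk
  have hRsig : R = Finset.univ.sigma Rk := by
    ext ⟨k, i⟩
    simp [hRk]
  have hRcard : R.card = ∑ k, (Rk k).card := by
    rw [hRsig, Finset.card_sigma]
  have key : ∀ k, ((Rk k).card : ℝ) ≤ (m k) * (1 - (C.card : ℝ) / n) := by
    intro k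
    have hle : (Rk k).card ≤ m k := by simpa using Finset.card_le_univ (Rk k)
    rcases Nat.eq_zero_or_pos (m k) with h | h
    · have : (Rk k).card = 0 := by omega
      simp [this, h]
    · have hmk : (0 : ℝ) < m k := by exact_mod_cast h
      have := hA k (Rk k) C (by
        intro i hi j hj
        exact hz ⟨k, i⟩ (by simpa [hRk] using hi) j hj)
      simp only [Fintype.card_fin] at this
      rw [mul_comm]
      exact (div_le_iff₀ hmk).mp (by linarith)
  rcases Nat.eq_zero_or_pos (∑ k, m k) with h | h
  · have hall : ∀ k, (Rk k).card = 0 := by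
      intro k
      have hmk : m k = 0 := by
        have := Finset.sum_eq_zero_iff.mp h
        exact this k (Finset.mem_univ k)
      have hle : (Rk k).card ≤ m k := by simpa using Finset.card_le_univ (Rk k)
      omega
    simp only [hRcard, hall, Finset.sum_const_zero, Nat.cast_zero, zero_div, zero_add]
    exact hcn
  · have hM : (0 : ℝ) < ∑ k, m k := by exact_mod_cast h
    rw [← sub_nonneg]
    have : ((R.card : ℝ)) / (∑ k, m k) ≤ 1 - (C.card : ℝ) / n := by
      rw [div_le_iff₀ hM, hRcard]
      push_cast
      calc (∑ k, ((Rk k).card : ℝ)) ≤ ∑ k, (m k : ℝ) * (1 - (C.card : ℝ) / n) :=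
            Finset.sum_le_sum fun k _ => key k
        _ = (1 - (C.card : ℝ) / n) * ∑ k, (m k : ℝ) := by rw [← Finset.sum_mul]; ring
    linarith
end

section
/- For every r ≥ 3 there exists a set T ⊆ [r]³ of r² − r triples such that: (1) each triple consists of three distinct elements; (2) every i ∈ [r] appears as an element of exactly 3(r−1) triples of T; (3) every pair of distinct i, j ∈ [r] appears together in at most 6 triples of T. -/
open scoped Classical


lemma card_six {α : Type*} [DecidableEq α] (a b c d e f : α) :
    ({a, b, c, d, e, f} : Finset α).card ≤ 6 := by
  refine (Finset.card_insert_le _ _).trans (Nat.add_le_add_right ?_ 1)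
  refine (Finset.card_insert_le _ _).trans (Nat.add_le_add_right ?_ 1)
  refine (Finset.card_insert_le _ _).trans (Nat.add_le_add_right ?_ 1)
  refine (Finset.card_insert_le _ _).trans (Nat.add_le_add_right ?_ 1)
  refine (Finset.card_insert_le _ _).trans (Nat.add_le_add_right ?_ 1)
  simp

theorem core {r : ℕ} (D : Fin r → Fin r → Fin r)
    (hdiag : ∀ i, D i i = i)
    (hrow : ∀ i, Function.Injective (D i))
    (hcol : ∀ j, Function.Injective fun i => D i j) :
    ∃ T : Finset (Fin r × Fin r × Fin r),
      T.card = r ^ 2 - r ∧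
      (∀ t ∈ T, t.1 ≠ t.2.1 ∧ t.1 ≠ t.2.2 ∧ t.2.1 ≠ t.2.2) ∧
      (∀ i : Fin r,
        (T.filter fun t => t.1 = i ∨ t.2.1 = i ∨ t.2.2 = i).card = 3 * (r - 1)) ∧
      (∀ i j : Fin r, i ≠ j →
        (T.filter fun t => (t.1 = i ∨ t.2.1 = i ∨ t.2.2 = i) ∧
          (t.1 = j ∨ t.2.1 = j ∨ t.2.2 = j)).card ≤ 6) := by
  classical
  rcases Nat.eq_zero_or_pos r with rfl | hpos
  · exact ⟨∅, by simp, by simp, fun i => i.elim0, fun i => i.elim0⟩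
  haveI : NeZero r := ⟨by omega⟩
  haveI : Nonempty (Fin r) := ⟨⟨0, by omega⟩⟩
  have hrsurj : ∀ a, Function.Surjective (D a) := fun a =>
    Finite.surjective_of_injective (hrow a)
  have hcsurj : ∀ j, Function.Surjective fun i => D i j := fun j =>
    Finite.surjective_of_injective (hcol j)
  set rinv : Fin r → Fin r → Fin r := fun a => Function.invFun (D a) with hrinv_def
  have hrinv : ∀ a y, D a (rinv a y) = y := fun a =>
    Function.rightInverse_invFun (hrsurj a)
  set cinv : Fin r → Fin r → Fin r := fun j => Function.invFun (fun i => D i j) with hcinv_def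
  have hcinv : ∀ j y, D (cinv j y) j = y := fun j =>
    Function.rightInverse_invFun (hcsurj j)
  set f : Fin r × Fin r → Fin r × Fin r × Fin r := fun p => (p.1, p.2, D p.1 p.2) with hf
  have hfinj : Function.Injective f := by
    intro p q h
    exact Prod.ext (congrArg (·.1) h) (congrArg (·.2.1) h)
  set S : Finset (Fin r × Fin r) := Finset.univ.offDiag with hS
  have hmemS : ∀ p : Fin r × Fin r, p ∈ S ↔ p.1 ≠ p.2 := by
    intro p; simp [hS, Finset.mem_offDiag]
  have hne3 : ∀ a b : Fin r, a ≠ b → D a b ≠ a ∧ D a b ≠ b := by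
    intro a b hab
    refine ⟨fun h => hab (hrow a (h.trans (hdiag a).symm)).symm,
      fun h => hab (hcol b (h.trans (hdiag b).symm))⟩
  refine ⟨S.image f, ?_, ?_, ?_, ?_⟩
  · rw [Finset.card_image_of_injective _ hfinj, hS, Finset.offDiag_card]
    simp [Finset.card_univ, pow_two]
  · rintro t ht
    obtain ⟨p, hp, rfl⟩ := Finset.mem_image.1 ht
    have hab := (hmemS p).1 hp
    obtain ⟨h1, h2⟩ := hne3 p.1 p.2 hab
    exact ⟨hab, fun h => h1 h.symm, fun h => h2 h.symm⟩
  · intro i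
    rw [Finset.filter_image, Finset.card_image_of_injective _ hfinj]
    have hsplit : (S.filter fun p => (f p).1 = i ∨ (f p).2.1 = i ∨ (f p).2.2 = i)
        = (S.filter fun p => p.1 = i) ∪
          ((S.filter fun p => p.2 = i) ∪ (S.filter fun p => D p.1 p.2 = i)) := by
      rw [← Finset.filter_or, ← Finset.filter_or]
    rw [hsplit]
    have hd1 : Disjoint (S.filter fun p => p.1 = i)
        ((S.filter fun p => p.2 = i) ∪ (S.filter fun p => D p.1 p.2 = i)) := by
      rw [Finset.disjoint_left]
      rintro p hp hp'
      have hne := (hmemS p).1 (Finset.mem_filter.1 hp).1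
      have h1 := (Finset.mem_filter.1 hp).2
      rcases Finset.mem_union.1 hp' with h | h
      · exact hne (h1.trans (Finset.mem_filter.1 h).2.symm)
      · exact (hne3 p.1 p.2 hne).1 ((Finset.mem_filter.1 h).2.trans h1.symm)
    have hd2 : Disjoint (S.filter fun p => p.2 = i) (S.filter fun p => D p.1 p.2 = i) := by
      rw [Finset.disjoint_left]
      rintro p hp hp'
      have hne := (hmemS p).1 (Finset.mem_filter.1 hp).1
      exact (hne3 p.1 p.2 hne).2
        ((Finset.mem_filter.1 hp').2.trans (Finset.mem_filter.1 hp).2.symm)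
    rw [Finset.card_union_of_disjoint hd1, Finset.card_union_of_disjoint hd2]
    have hA : (S.filter fun p => p.1 = i) = (Finset.univ.erase i).image (fun j => (i, j)) := by
      ext ⟨a, b⟩
      simp only [Finset.mem_filter, Finset.mem_image, Finset.mem_erase, Finset.mem_univ,
        hmemS, and_true, Prod.mk.injEq]
      constructor
      · rintro ⟨hab, rfl⟩
        exact ⟨b, fun h => hab h.symm, rfl, rfl⟩
      · rintro ⟨c, hc, rfl, rfl⟩
        exact ⟨fun h => hc h.symm, rfl⟩
    have hB : (S.filter fun p => p.2 = i) = (Finset.univ.erase i).image (fun a => (a, i)) := by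
      ext ⟨a, b⟩
      simp only [Finset.mem_filter, Finset.mem_image, Finset.mem_erase, Finset.mem_univ,
        hmemS, and_true, Prod.mk.injEq]
      constructor
      · rintro ⟨hab, rfl⟩
        exact ⟨a, hab, rfl, rfl⟩
      · rintro ⟨c, hc, rfl, rfl⟩
        exact ⟨hc, rfl⟩
    have hC : (S.filter fun p => D p.1 p.2 = i)
        = (Finset.univ.erase i).image (fun a => (a, rinv a i)) := by
      ext ⟨a, b⟩
      simp only [Finset.mem_filter, Finset.mem_image, Finset.mem_erase, Finset.mem_univ,
        hmemS, and_true, Prod.mk.injEq]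
      constructor
      · rintro ⟨hab, hD⟩
        refine ⟨a, fun h => (hne3 a b hab).1 (by rw [hD, h]) , rfl, ?_⟩
        exact hrow a (by rw [hrinv, hD])
      · rintro ⟨c, hc, rfl, rfl⟩
        refine ⟨fun h => hc ?_, hrinv c i⟩
        have h2 : D c c = i := by nth_rewrite 2 [h]; exact hrinv c i
        rw [hdiag c] at h2; exact h2
    have hinj1 : Function.Injective fun j : Fin r => (i, j) := by
      intro a b h; exact (Prod.mk.injEq .. ▸ h).2
    have hinj2 : Function.Injective fun a : Fin r => (a, i) := by
      intro a b h; exact (Prod.mk.injEq .. ▸ h).1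
    have hinj3 : Function.Injective fun a : Fin r => (a, rinv a i) := by
      intro a b h; exact (Prod.mk.injEq .. ▸ h).1
    rw [hA, hB, hC, Finset.card_image_of_injective _ hinj1,
      Finset.card_image_of_injective _ hinj2, Finset.card_image_of_injective _ hinj3]
    rw [Finset.card_erase_of_mem (Finset.mem_univ i), Finset.card_univ, Fintype.card_fin]
    ring
  · intro i j hij
    rw [Finset.filter_image, Finset.card_image_of_injective _ hfinj]
    set L : Finset (Fin r × Fin r) :=
      {(i, j), (j, i), (i, rinv i j), (j, rinv j i), (cinv i j, i), (cinv j i, j)} with hL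
    have hsub : (S.filter fun p => ((f p).1 = i ∨ (f p).2.1 = i ∨ (f p).2.2 = i) ∧
        ((f p).1 = j ∨ (f p).2.1 = j ∨ (f p).2.2 = j)) ⊆ L := by
      rintro ⟨a, b⟩ hp
      obtain ⟨hpS, hi, hj⟩ := Finset.mem_filter.1 hp
      have hab : a ≠ b := (hmemS _).1 hpS
      simp only [hf] at hi hj
      simp only [hL, Finset.mem_insert, Finset.mem_singleton, Prod.mk.injEq]
      rcases hi with rfl | rfl | hDi
      · rcases hj with rfl | rfl | hDj
        · exact absurd rfl hij
        · exact Or.inl ⟨rfl, rfl⟩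
        · refine Or.inr (Or.inr (Or.inl ⟨rfl, ?_⟩))
          exact hrow a (by rw [hrinv, hDj])
      · rcases hj with rfl | rfl | hDj
        · exact Or.inr (Or.inl ⟨rfl, rfl⟩)
        · exact absurd rfl hij
        · refine Or.inr (Or.inr (Or.inr (Or.inr (Or.inl ⟨?_, rfl⟩))))
          exact hcol b (show D a b = D (cinv b _) b by rw [hDj, hcinv])
      · rcases hj with rfl | rfl | hDj
        · refine Or.inr (Or.inr (Or.inr (Or.inl ⟨rfl, ?_⟩)))
          exact hrow a (by rw [hrinv, hDi])
        · refine Or.inr (Or.inr (Or.inr (Or.inr (Or.inr ⟨?_, rfl⟩))))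
          exact hcol b (show D a b = D (cinv b _) b by rw [hDi, hcinv])
        · exact absurd (hDi.symm.trans hDj) hij
    exact (Finset.card_le_card hsub).trans (card_six _ _ _ _ _ _)


lemma two_inj (m : ℕ) (hodd : ¬ 2 ∣ (m + 1)) :
    Function.Injective (fun x : Fin (m + 1) => 2 * x) := by
  have hu : IsUnit (2 : ZMod (m+1)) := by
    have h2 : ((2:ℕ) : ZMod (m+1)) = 2 := by push_cast; ring
    rw [← h2, ZMod.isUnit_iff_coprime]
    have := Nat.coprime_two_left (n := m+1)
    rw [this]
    exact Nat.odd_iff.2 (by omega)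
  intro a b hab
  exact hu.mul_left_cancel hab

open Fin.CommRing in
lemma odd_D (m : ℕ) (hodd : ¬ 2 ∣ (m + 1)) :
    ∃ D : Fin (m+1) → Fin (m+1) → Fin (m+1),
      (∀ i, D i i = i) ∧ (∀ i, Function.Injective (D i)) ∧
      (∀ j, Function.Injective fun i => D i j) := by
  refine ⟨fun i j => 2 * i - j, fun i => by ring, fun i a b h => ?_, fun j a b h => ?_⟩
  · exact (by linear_combination -h : (a : Fin (m+1)) = b)
  · simp only at h
    have h2 : 2 * a = 2 * b := by linear_combination h
    exact two_inj m hodd h2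


open Fin.CommRing in
lemma even_D (k : ℕ) (hodd : ¬ 2 ∣ (k + 3)) :
    ∃ D : Fin (k+4) → Fin (k+4) → Fin (k+4),
      (∀ i, D i i = i) ∧ (∀ i, Function.Injective (D i)) ∧
      (∀ j, Function.Injective fun i => D i j) := by
  have htwo : Function.Injective (fun x : Fin (k + 3) => 2 * x) := two_inj (k+2) hodd
  set cs : Fin (k+3) → Fin (k+4) := Fin.castSucc with hcs_def
  set lst : Fin (k+4) := Fin.last (k+3) with hlst_def
  have hcs : Function.Injective cs := Fin.castSucc_injective _
  have hcsne : ∀ x, cs x ≠ lst := fun x => (Fin.castSucc_lt_last x).ne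
  have hone : (1 : Fin (k+3)) ≠ 0 := by
    simp [Fin.ext_iff]
  refine ⟨fun i j => i.lastCases
      (j.lastCases lst (fun j' => cs (j' - 2)))
      (fun i' => j.lastCases (cs (i' - 1))
        (fun j' => if j' = i' + 1 then lst else cs (2 * i' - j'))),
    ?_, ?_, ?_⟩
  · -- diagonal
    intro i
    rcases Fin.eq_castSucc_or_eq_last i with ⟨i', rfl⟩ | rfl
    · simp only [Fin.lastCases_castSucc]
      rw [if_neg, show 2 * i' - i' = i' by ring]
      intro h
      exact hone (by linear_combination -h)
    · simp only [Fin.lastCases_last]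
      exact hlst_def
  · -- rows injective
    intro i
    rcases Fin.eq_castSucc_or_eq_last i with ⟨i', rfl⟩ | rfl
    · intro j₁ j₂ h
      simp only [Fin.lastCases_castSucc] at h
      rcases Fin.eq_castSucc_or_eq_last j₁ with ⟨a, rfl⟩ | rfl <;>
        rcases Fin.eq_castSucc_or_eq_last j₂ with ⟨b, rfl⟩ | rfl
      · simp only [Fin.lastCases_castSucc] at h
        by_cases ha : a = i' + 1 <;> by_cases hb : b = i' + 1
        · rw [ha, hb]
        · rw [if_pos ha, if_neg hb] at h; exact absurd h.symm (hcsne _)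
        · rw [if_neg ha, if_pos hb] at h; exact absurd h (hcsne _)
        · rw [if_neg ha, if_neg hb] at h
          have := hcs h
          exact congrArg cs (by linear_combination -this)
      · simp only [Fin.lastCases_castSucc, Fin.lastCases_last] at h
        by_cases ha : a = i' + 1
        · rw [if_pos ha] at h
          exact absurd h.symm (hcsne _)
        · rw [if_neg ha] at h
          have := hcs h
          exact absurd (by linear_combination -this) ha
      · simp only [Fin.lastCases_castSucc, Fin.lastCases_last] at h
        by_cases hb : b = i' + 1
        · rw [if_pos hb] at h
          exact absurd h (hcsne _)
        · rw [if_neg hb] at h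
          have := hcs h.symm
          exact absurd (by linear_combination -this) hb
      · rfl
    · intro j₁ j₂ h
      simp only [Fin.lastCases_last] at h
      rcases Fin.eq_castSucc_or_eq_last j₁ with ⟨a, rfl⟩ | rfl <;>
        rcases Fin.eq_castSucc_or_eq_last j₂ with ⟨b, rfl⟩ | rfl
      · simp only [Fin.lastCases_castSucc] at h
        exact congrArg cs (by linear_combination hcs h)
      · simp only [Fin.lastCases_castSucc, Fin.lastCases_last] at h
        exact absurd h (hcsne _)
      · simp only [Fin.lastCases_castSucc, Fin.lastCases_last] at h
        exact absurd h.symm (hcsne _)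
      · rfl
  · -- columns injective
    intro j
    rcases Fin.eq_castSucc_or_eq_last j with ⟨j', rfl⟩ | rfl
    · intro i₁ i₂ h
      simp only at h
      rcases Fin.eq_castSucc_or_eq_last i₁ with ⟨a, rfl⟩ | rfl <;>
        rcases Fin.eq_castSucc_or_eq_last i₂ with ⟨b, rfl⟩ | rfl
      · simp only [Fin.lastCases_castSucc] at h
        by_cases ha : j' = a + 1 <;> by_cases hb : j' = b + 1
        · exact congrArg cs (by linear_combination hb - ha)
        · rw [if_pos ha, if_neg hb] at h; exact absurd h.symm (hcsne _)
        · rw [if_neg ha, if_pos hb] at h; exact absurd h (hcsne _)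
        · rw [if_neg ha, if_neg hb] at h
          have h2 : 2 * a = 2 * b := by linear_combination hcs h
          exact congrArg cs (htwo h2)
      · simp only [Fin.lastCases_castSucc, Fin.lastCases_last] at h
        by_cases ha : j' = a + 1
        · rw [if_pos ha] at h; exact absurd h.symm (hcsne _)
        · rw [if_neg ha] at h
          have h2 : 2 * a = 2 * (j' - 1) := by linear_combination hcs h
          have := htwo h2
          exact absurd (by linear_combination -this) ha
      · simp only [Fin.lastCases_castSucc, Fin.lastCases_last] at h
        by_cases hb : j' = b + 1
        · rw [if_pos hb] at h; exact absurd h (hcsne _)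
        · rw [if_neg hb] at h
          have h2 : 2 * b = 2 * (j' - 1) := by linear_combination hcs h.symm
          have := htwo h2
          exact absurd (by linear_combination -this) hb
      · rfl
    · intro i₁ i₂ h
      simp only at h
      rcases Fin.eq_castSucc_or_eq_last i₁ with ⟨a, rfl⟩ | rfl <;>
        rcases Fin.eq_castSucc_or_eq_last i₂ with ⟨b, rfl⟩ | rfl
      · simp only [Fin.lastCases_castSucc, Fin.lastCases_last] at h
        exact congrArg cs (by linear_combination hcs h)
      · simp only [Fin.lastCases_castSucc, Fin.lastCases_last] at h
        exact absurd h (hcsne _)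
      · simp only [Fin.lastCases_castSucc, Fin.lastCases_last] at h
        exact absurd h.symm (hcsne _)
      · rfl


/-- For every `r ≥ 3` there is a family `T` of `r² - r` triples from `[r]` such that
each triple has three distinct elements, every `i` lies in exactly `3(r-1)` triples,
and every pair of distinct elements lies in at most `6` triples. -/
theorem exists_triple_system (r : ℕ) (hr : 3 ≤ r) :
    ∃ T : Finset (Fin r × Fin r × Fin r),
      T.card = r ^ 2 - r ∧
      (∀ t ∈ T, t.1 ≠ t.2.1 ∧ t.1 ≠ t.2.2 ∧ t.2.1 ≠ t.2.2) ∧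
      (∀ i : Fin r,
        (T.filter fun t => t.1 = i ∨ t.2.1 = i ∨ t.2.2 = i).card = 3 * (r - 1)) ∧
      (∀ i j : Fin r, i ≠ j →
        (T.filter fun t => (t.1 = i ∨ t.2.1 = i ∨ t.2.2 = i) ∧
          (t.1 = j ∨ t.2.1 = j ∨ t.2.2 = j)).card ≤ 6) := by
  rcases Nat.even_or_odd r with he | ho
  · obtain ⟨c, hc⟩ := he
    obtain ⟨k, rfl⟩ : ∃ k, r = k + 4 := ⟨r - 4, by omega⟩
    obtain ⟨D, h1, h2, h3⟩ := even_D k (by omega)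
    exact core D h1 h2 h3
  · obtain ⟨c, hc⟩ := ho
    obtain ⟨k, rfl⟩ : ∃ k, r = k + 1 := ⟨r - 1, by omega⟩
    obtain ⟨D, h1, h2, h3⟩ := odd_D k (by omega)
    exact core D h1 h2 h3
end

section
/- Let H be a 3-uniform hypergraph on vertex set [m] with at least αm² edges, such that every pair of distinct vertices is contained in at most c edges. Then there exists a subset M ⊆ [m] with |M| ≥ αm/(2c) such that every vertex of M is contained in at least αm/2 edges of the subhypergraph induced by M. -/
open scoped Classical

/-- In a 3-uniform hypergraph on `[m]` with at least `α m²` edges in which every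
pair of distinct vertices lies in at most `c` edges, there is a subset `M` of at
least `α m / (2c)` vertices such that every vertex of `M` lies in at least
`α m / 2` edges of the subhypergraph induced by `M`. -/
theorem hypergraph_min_degree_subset (m c : ℕ) (hc : 0 < c) (α : ℝ)
    (E : Finset (Finset (Fin m)))
    (huniform : ∀ e ∈ E, e.card = 3)
    (hsize : α * (m : ℝ) ^ 2 ≤ (E.card : ℝ))
    (hcodeg : ∀ i j : Fin m, i ≠ j → (E.filter fun e => i ∈ e ∧ j ∈ e).card ≤ c) :
    ∃ M : Finset (Fin m), α * m / (2 * c) ≤ (M.card : ℝ) ∧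
      ∀ v ∈ M, α * m / 2 ≤ ((E.filter fun e => v ∈ e ∧ e ⊆ M).card : ℝ) := by
  have hc' : (0:ℝ) < c := by exact_mod_cast hc
  by_cases hα : α * m ≤ 0
  · refine ⟨∅, ?_, by simp⟩
    simp only [Finset.card_empty, Nat.cast_zero]
    exact div_nonpos_of_nonpos_of_nonneg hα (by positivity)
  push_neg at hα
  have hm : 0 < m := by
    by_contra h
    have : m = 0 := by omega
    simp [this] at hα
  have hmR : (0:ℝ) < m := by exact_mod_cast hm
  have hαpos : 0 < α := by
    by_contra h
    push_neg at h
    nlinarith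
  -- f M = number of edges inside M
  set f : Finset (Fin m) → ℕ := fun M => (E.filter fun e => e ⊆ M).card with hf
  -- splitting f over erase
  have hsplit : ∀ (M : Finset (Fin m)) (v : Fin m),
      f (M.erase v) + (E.filter fun e => v ∈ e ∧ e ⊆ M).card = f M := by
    intro M v
    have h1 : (E.filter fun e => e ⊆ M.erase v)
        = (E.filter fun e => ¬ v ∈ e ∧ e ⊆ M) := by
      apply Finset.filter_congr
      intro e he
      simp [Finset.subset_erase, and_comm]
    rw [hf]
    simp only [h1]
    have := Finset.card_filter_add_card_filter_not
      (s := E.filter fun e => e ⊆ M) (p := fun e => v ∈ e)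
    rw [Finset.filter_filter, Finset.filter_filter] at this
    have h2 : (E.filter fun e => ¬ v ∈ e ∧ e ⊆ M).card
        = (E.filter fun e => e ⊆ M ∧ ¬ v ∈ e).card := by
      congr 1; apply Finset.filter_congr; intro e he; tauto
    have h3 : (E.filter fun e => v ∈ e ∧ e ⊆ M).card
        = (E.filter fun e => e ⊆ M ∧ v ∈ e).card := by
      congr 1; apply Finset.filter_congr; intro e he; tauto
    omega
  have key : ∀ (n : ℕ) (M : Finset (Fin m)), M.card ≤ n →
      α * m ^ 2 - α * m / 2 * ((m : ℝ) - M.card) ≤ (f M : ℝ) →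
      ∃ M' : Finset (Fin m),
        (α * m ^ 2 - α * m / 2 * ((m : ℝ) - M'.card) ≤ (f M' : ℝ)) ∧
        ∀ v ∈ M', α * m / 2 ≤ ((E.filter fun e => v ∈ e ∧ e ⊆ M').card : ℝ) := by
    intro n
    induction n with
    | zero =>
      intro M hcard hinv
      have : M = ∅ := Finset.card_eq_zero.mp (Nat.le_zero.mp hcard)
      exact ⟨M, hinv, by simp [this]⟩
    | succ n ih =>
      intro M hcard hinv
      by_cases hdeg : ∀ v ∈ M, α * m / 2 ≤ ((E.filter fun e => v ∈ e ∧ e ⊆ M).card : ℝ)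
      · exact ⟨M, hinv, hdeg⟩
      · push_neg at hdeg
        obtain ⟨v, hvM, hv⟩ := hdeg
        have hcard1 : 1 ≤ M.card := Finset.card_pos.mpr ⟨v, hvM⟩
        have hce : (M.erase v).card = M.card - 1 := Finset.card_erase_of_mem hvM
        have hcast : ((M.erase v).card : ℝ) = (M.card : ℝ) - 1 := by
          rw [hce, Nat.cast_sub hcard1]; simp
        apply ih (M.erase v) (by omega)
        have hs := hsplit M v
        have : (f (M.erase v) : ℝ) = (f M : ℝ) - ((E.filter fun e => v ∈ e ∧ e ⊆ M).card : ℝ) := by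
          have := congrArg (fun x : ℕ => (x : ℝ)) hs
          push_cast at this
          linarith
        rw [this, hcast]
        linarith
  have hfU : (E.filter fun e => e ⊆ (Finset.univ : Finset (Fin m))).card = E.card := by
    congr 1
    apply Finset.filter_true_of_mem
    intro e _
    exact Finset.subset_univ e
  obtain ⟨M, hinv, hdeg⟩ := key m Finset.univ (by simp) (by
    rw [hf]
    simp only [hfU, Finset.card_univ, Fintype.card_fin]
    have : (m : ℝ) - m = 0 := by ring
    rw [this]
    linarith)
  refine ⟨M, ?_, hdeg⟩
  -- M is nonempty since f M > 0
  have hMm : (M.card : ℝ) ≤ m := by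
    exact_mod_cast le_trans (Finset.card_le_card (Finset.subset_univ M)) (by simp)
  have hfpos : 0 < (f M : ℝ) := by
    have : α * m ^ 2 - α * m / 2 * ((m : ℝ) - M.card) ≥ α * m ^ 2 / 2 := by
      nlinarith
    nlinarith
  have hfnat : 0 < f M := by exact_mod_cast hfpos
  obtain ⟨e, he⟩ := Finset.card_pos.mp hfnat

  simp only [Finset.mem_filter] at he
  obtain ⟨heE, heM⟩ := he
  have hecard : e.card = 3 := huniform e heE
  obtain ⟨v, hve⟩ := Finset.card_pos.mp (by omega : 0 < e.card)
  have hvM : v ∈ M := heM hve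
  -- degree bound via codegrees
  have hdv := hdeg v hvM
  have hsub : (E.filter fun e => v ∈ e ∧ e ⊆ M)
      ⊆ (M.erase v).biUnion (fun u => E.filter fun e => v ∈ e ∧ u ∈ e) := by
    intro e' he'
    simp only [Finset.mem_filter] at he'
    obtain ⟨he'E, hve', he'M⟩ := he'
    have h3 : e'.card = 3 := huniform e' he'E
    have : 1 < e'.card := by omega
    obtain ⟨u, hue', hune⟩ := Finset.exists_mem_ne (s := e') (by omega) v
    simp only [Finset.mem_biUnion, Finset.mem_filter]
    exact ⟨u, Finset.mem_erase.mpr ⟨hune, he'M hue'⟩, he'E, hve', hue'⟩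
  have hbound : (E.filter fun e => v ∈ e ∧ e ⊆ M).card ≤ M.card * c := by
    calc (E.filter fun e => v ∈ e ∧ e ⊆ M).card
        ≤ ∑ u ∈ M.erase v, (E.filter fun e => v ∈ e ∧ u ∈ e).card :=
          le_trans (Finset.card_le_card hsub) (Finset.card_biUnion_le)
      _ ≤ ∑ u ∈ M.erase v, c := by
          apply Finset.sum_le_sum
          intro u hu
          exact hcodeg v u (Finset.ne_of_mem_erase hu).symm
      _ = (M.erase v).card * c := by rw [Finset.sum_const, smul_eq_mul]
      _ ≤ M.card * c := Nat.mul_le_mul_right c (Finset.card_erase_le)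
  have hboundR : ((E.filter fun e => v ∈ e ∧ e ⊆ M).card : ℝ) ≤ (M.card : ℝ) * c := by
    exact_mod_cast hbound
  rw [div_le_iff₀ (by positivity)]
  nlinarith
end

section
/- Let m ≥ n and let A be an m×n complex (q,k,t)-design matrix. Then rank(A) ≥ n − (q·t·n/(2k))². -/
open scoped Classical

open Finset Matrix Filter

/-- If `a e^s - b s ≥ a - ε|s|` for all `s`, with `a ≥ 0`, then `|a - b| ≤ ε`. -/
lemma slope_lemma {a b ε : ℝ} (ha : 0 ≤ a) (hε : 0 < ε)
    (h : ∀ s : ℝ, a - ε * |s| ≤ a * Real.exp s - b * s) : |a - b| ≤ ε := by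
  have claim1 : ∀ s : ℝ, 0 < s → s < 1 → (b - ε) * (1 - s) ≤ a := by
    intro s hs0 hs1
    have h2 : a - ε * s ≤ a * Real.exp s - b * s := by
      have := h s; rwa [abs_of_pos hs0] at this
    have h6 : (b - ε) * s ≤ a * (Real.exp s - 1) := by nlinarith
    have he0 : (1 - s) ≤ Real.exp (-s) := by linarith [Real.add_one_le_exp (-s)]
    have he1 : (1 - s) * Real.exp s ≤ 1 := by
      have := mul_le_mul_of_nonneg_right he0 (Real.exp_pos s).le
      rwa [← Real.exp_add, neg_add_cancel, Real.exp_zero] at this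
    have hA1 : (Real.exp s - 1) * (1 - s) ≤ s := by nlinarith
    have hA2 : a * ((Real.exp s - 1) * (1 - s)) ≤ a * s := mul_le_mul_of_nonneg_left hA1 ha
    have hA3 : (b - ε) * s * (1 - s) ≤ a * (Real.exp s - 1) * (1 - s) :=
      mul_le_mul_of_nonneg_right h6 (by linarith)
    have hA4 : (b - ε) * (1 - s) * s ≤ a * s := by nlinarith
    exact le_of_mul_le_mul_right hA4 hs0
  have claim2 : ∀ u : ℝ, 0 < u → a ≤ (b + ε) * (1 + u) := by
    intro u hu0
    have h2 : a - ε * u ≤ a * Real.exp (-u) + b * u := by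
      have := h (-u)
      rw [abs_neg, abs_of_pos hu0] at this
      linarith
    -- exp(-u) ≤ 1/(1+u)
    have he0 : (1 + u) ≤ Real.exp u := by linarith [Real.add_one_le_exp u]
    have he1 : (1 + u) * Real.exp (-u) ≤ 1 := by
      have := mul_le_mul_of_nonneg_right he0 (Real.exp_pos (-u)).le
      rwa [← Real.exp_add, add_neg_cancel, Real.exp_zero] at this
    -- a(1 - exp(-u)) ≤ (b+ε) u  and 1 - exp(-u) ≥ u/(1+u)
    have h6 : a * (1 - Real.exp (-u)) ≤ (b + ε) * u := by nlinarith
    have hA1 : u ≤ (1 - Real.exp (-u)) * (1 + u) := by nlinarith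
    have hA2 : a * u ≤ a * ((1 - Real.exp (-u)) * (1 + u)) := mul_le_mul_of_nonneg_left hA1 ha
    have hA3 : a * (1 - Real.exp (-u)) * (1 + u) ≤ (b + ε) * u * (1 + u) :=
      mul_le_mul_of_nonneg_right h6 (by linarith)
    have hA4 : a * u ≤ (b + ε) * (1 + u) * u := by nlinarith
    exact le_of_mul_le_mul_right hA4 hu0
  rw [abs_le]
  constructor
  · -- -ε ≤ a - b  ⟺  b - ε ≤ a
    by_contra hc
    push_neg at hc
    have hba : 0 < b - ε - a := by linarith
    have hba' : 0 < b - ε := by linarith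
    set s : ℝ := min (1/2) ((b - ε - a) / (2 * (b - ε))) with hs
    have hs0 : 0 < s := lt_min (by norm_num) (by positivity)
    have hs1 : s < 1 := lt_of_le_of_lt (min_le_left _ _) (by norm_num)
    have := claim1 s hs0 hs1
    have h7 : (b - ε) * s ≤ (b - ε) * ((b - ε - a) / (2 * (b - ε))) :=
      mul_le_mul_of_nonneg_left (min_le_right _ _) hba'.le
    have h8 : (b - ε) * ((b - ε - a) / (2 * (b - ε))) = (b - ε - a) / 2 := by
      field_simp
    nlinarith
  · -- a - b ≤ ε  ⟺  a ≤ b + ε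
    by_contra hc
    push_neg at hc
    have hba : 0 < a - (b + ε) := by linarith
    have hbe : 0 ≤ b + ε := by
      by_contra hneg
      push_neg at hneg
      have := claim2 1 one_pos
      nlinarith
    set u : ℝ := (a - (b + ε)) / (2 * (b + ε) + 1) with hu
    have hu0 : 0 < u := by positivity
    have := claim2 u hu0
    have h7 : (b + ε) * u ≤ (b + ε + 1/2) * u := by nlinarith
    have h8 : (b + ε + 1/2) * u < (a - (b+ε)) := by
      rw [hu]
      rw [mul_div_assoc']
      rw [div_lt_iff₀ (by positivity)]
      nlinarith
    nlinarith

/-- Mini-Ekeland: a continuous function bounded below on a proper space has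
`ε`-approximate critical points. -/
lemma exists_approx_crit {E : Type*} [NormedAddCommGroup E] [NormedSpace ℝ E] [ProperSpace E]
    (f : E → ℝ) (hf : Continuous f) (C : ℝ) (hC : ∀ x, C ≤ f x) {ε : ℝ} (hε : 0 < ε) :
    ∃ x : E, ∀ y, f x - ε * ‖y - x‖ ≤ f y := by
  set R : ℝ := (f 0 - C) / ε + 1 with hR
  have hR1 : 1 ≤ R := by
    have : 0 ≤ (f 0 - C)/ε := by
      apply div_nonneg _ hε.le
      linarith [hC 0]
    simp only [hR]; linarith
  set g : E → ℝ := fun x => f x + ε * ‖x‖ with hg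
  have hgc : Continuous g := by fun_prop
  obtain ⟨x, hxK, hxmin⟩ := (isCompact_closedBall (0:E) R).exists_isMinOn
    ⟨0, Metric.mem_closedBall_self (by linarith)⟩ hgc.continuousOn
  refine ⟨x, fun y => ?_⟩
  have hgx : ∀ z : E, g x ≤ g z := by
    intro z
    by_cases hz : z ∈ Metric.closedBall (0:E) R
    · exact hxmin hz
    · have hz' : R < ‖z‖ := by
        simp only [Metric.mem_closedBall, dist_zero_right, not_le] at hz
        exact hz
      have h1 : g x ≤ g 0 := hxmin (Metric.mem_closedBall_self (by linarith))
      have h2 : g 0 = f 0 := by simp [hg]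
      have h3 : f 0 < g z := by
        have h4 : f z + ε * R < f z + ε * ‖z‖ := by
          have := mul_lt_mul_of_pos_left hz' hε
          linarith
        have h5 : f 0 ≤ C + ε * R := by
          simp only [hR]
          have : ε * ((f 0 - C)/ε + 1) = (f 0 - C) + ε := by field_simp
          rw [this]; linarith
        calc f 0 ≤ C + ε * R := h5
          _ ≤ f z + ε * R := by linarith [hC z]
          _ < f z + ε * ‖z‖ := h4
          _ = g z := rfl
      linarith
  have hxy := hgx y
  simp only [hg] at hxy
  have htri : ‖y‖ - ‖x‖ ≤ ‖y - x‖ := norm_sub_norm_le y x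
  linarith [mul_le_mul_of_nonneg_left htri hε.le]

/-- Splitting a sum at an updated coordinate. -/
lemma sum_update_split {α : Type*} [Fintype α] [DecidableEq α]
    (g : α → ℝ → ℝ) (u : α → ℝ) (i : α) (w : ℝ) :
    ∑ i', g i' (Function.update u i w i') = g i w + ∑ i' ∈ Finset.univ \ {i}, g i' (u i') := by
  have hupd : (fun i' => g i' (Function.update u i w i'))
      = Function.update (fun i' => g i' (u i')) i (g i w) := by
    funext i'
    by_cases h : i' = i
    · subst h; simp
    · simp [Function.update_of_ne h]
  calc ∑ i', g i' (Function.update u i w i')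
      = ∑ i', Function.update (fun i' => g i' (u i')) i (g i w) i' := by rw [hupd]
    _ = g i w + ∑ i' ∈ Finset.univ \ {i}, g i' (u i') :=
      Finset.sum_update_of_mem (Finset.mem_univ i) _ _

lemma sum_split_base {α : Type*} [Fintype α] [DecidableEq α]
    (g : α → ℝ → ℝ) (u : α → ℝ) (i : α) :
    ∑ i', g i' (u i') = g i (u i) + ∑ i' ∈ Finset.univ \ {i}, g i' (u i') := by
  have := sum_update_split g u i (u i)
  rwa [Function.update_eq_self] at this

lemma scaling_exists {m n q k : ℕ} (hk : 0 < k) (hn : 0 < n) (hm : 0 < m)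
    (A : Matrix (Fin m) (Fin n) ℂ)
    (hrow : ∀ i, (Finset.univ.filter fun j => A i j ≠ 0).card ≤ q)
    (hcol : ∀ j, k ≤ (Finset.univ.filter fun i => A i j ≠ 0).card)
    {ε : ℝ} (hε0 : 0 < ε) (hε1 : ε < 1) :
    ∃ (ρ : Fin m → ℝ) (γ : Fin n → ℝ), (∀ i, 0 < ρ i) ∧ (∀ j, 0 < γ j) ∧
      (∀ j, ∑ i, ρ i * γ j * ‖A i j‖^2 = 1) ∧
      (∀ i, ∑ j, ρ i * γ j * ‖A i j‖^2 ≤ ((q:ℝ)/k + ε)/(1 - ε)) := by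
  have hkR : (0:ℝ) < k := by exact_mod_cast hk
  set P : Fin m → Fin n → ℝ := fun i j => ‖A i j‖^2 with hP
  have hPnn : ∀ i j, 0 ≤ P i j := fun i j => by positivity
  have hPpos : ∀ i j, A i j ≠ 0 → 0 < P i j :=
    fun i j h => pow_pos (norm_pos_iff.mpr h) 2
  set r : Fin m → ℝ := fun i => ((Finset.univ.filter fun j => A i j ≠ 0).card : ℝ)/k with hr
  set c : Fin n → ℝ := fun j => ((Finset.univ.filter fun i => A i j ≠ 0).card : ℝ)/k with hc
  have hrq : ∀ i, r i ≤ (q:ℝ)/k := by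
    intro i
    rw [hr]
    exact div_le_div_of_nonneg_right (by exact_mod_cast hrow i) hkR.le
  have hc1 : ∀ j, 1 ≤ c j := fun j => by
    rw [hc, le_div_iff₀ hkR, one_mul]
    exact_mod_cast hcol j
  set f : (Fin m → ℝ) × (Fin n → ℝ) → ℝ := fun x =>
    (∑ i, ∑ j, P i j * Real.exp (x.1 i + x.2 j))
      - (∑ i, r i * x.1 i) - (∑ j, c j * x.2 j) with hf
  have hfc : Continuous f := by fun_prop
  have termineq : ∀ (i : Fin m) (j : Fin n) (s : ℝ),
      (if A i j ≠ 0 then ((1 + Real.log (k * P i j)) + s)/k else 0) ≤ P i j * Real.exp s := by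
    intro i j s
    by_cases h : A i j = 0
    · simp only [h, ne_eq, not_true_eq_false, if_false]
      exact mul_nonneg (hPnn i j) (Real.exp_nonneg s)
    · simp only [h, ne_eq, not_false_eq_true, if_true]
      have hp : 0 < (k:ℝ) * P i j := mul_pos hkR (hPpos i j h)
      have h1 := Real.add_one_le_exp (s + Real.log (k * P i j))
      rw [Real.exp_add, Real.exp_log hp] at h1
      rw [div_le_iff₀ hkR]
      nlinarith [Real.exp_pos s]
  have hlin1 : ∀ u : Fin m → ℝ, (∑ i, r i * u i)
      = ∑ i, ∑ j, (if A i j ≠ 0 then u i / k else 0) := by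
    intro u
    apply Finset.sum_congr rfl
    intro i _
    rw [← Finset.sum_filter, Finset.sum_const, nsmul_eq_mul, hr]
    ring
  have hlin2 : ∀ v : Fin n → ℝ, (∑ j, c j * v j)
      = ∑ i, ∑ j, (if A i j ≠ 0 then v j / k else 0) := by
    intro v
    rw [Finset.sum_comm]
    apply Finset.sum_congr rfl
    intro j _
    rw [← Finset.sum_filter, Finset.sum_const, nsmul_eq_mul, hc]
    ring
  set C : ℝ := ∑ i, ∑ j, (if A i j ≠ 0 then (1 + Real.log (k * P i j))/k else 0) with hCdef
  have hC : ∀ x, C ≤ f x := by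
    intro x
    have h1 : f x = ∑ i, ∑ j, (P i j * Real.exp (x.1 i + x.2 j)
        - (if A i j ≠ 0 then x.1 i / k else 0) - (if A i j ≠ 0 then x.2 j / k else 0)) := by
      rw [hf]
      simp only [hlin1 x.1, hlin2 x.2, ← Finset.sum_sub_distrib]
    rw [h1, hCdef]
    apply Finset.sum_le_sum
    intro i _
    apply Finset.sum_le_sum
    intro j _
    have h2 := termineq i j (x.1 i + x.2 j)
    by_cases h : A i j = 0
    · simp only [h, ne_eq, not_true_eq_false, if_false] at h2 ⊢
      simpa using h2
    · simp only [h, ne_eq, not_false_eq_true, if_true] at h2 ⊢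
      have h3 : (1 + Real.log (↑k * P i j) + (x.1 i + x.2 j)) / ↑k
          = (1 + Real.log (↑k * P i j)) / ↑k + x.1 i / ↑k + x.2 j / ↑k := by ring
      rw [h3] at h2
      linarith
  obtain ⟨x, hx⟩ := exists_approx_crit f hfc C hC hε0
  obtain ⟨u, v⟩ := x
  -- row marginals
  have hrowm : ∀ i, |(∑ j, P i j * Real.exp (u i + v j)) - r i| ≤ ε := by
    intro i
    set a : ℝ := ∑ j, P i j * Real.exp (u i + v j) with ha
    apply slope_lemma (by positivity) hε0
    intro s
    have hy := hx (Function.update u i (u i + s), v)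
    set G : Fin m → ℝ → ℝ := fun i' w => ∑ j, P i' j * Real.exp (w + v j) with hG
    have hGs : G i (u i + s) = a * Real.exp s := by
      rw [hG, ha, Finset.sum_mul]
      apply Finset.sum_congr rfl
      intro j _
      rw [show u i + s + v j = (u i + v j) + s by ring, Real.exp_add]
      ring
    have hfy : f (Function.update u i (u i + s), v) = f (u, v) + a * Real.exp s - a - r i * s := by
      rw [hf]
      simp only
      rw [show ∀ x1 : Fin m → ℝ, ∑ i', ∑ j, P i' j * Real.exp (x1 i' + v j) = ∑ i', G i' (x1 i')
        from fun _ => rfl]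
      rw [sum_update_split G u i (u i + s), sum_split_base G u i, hGs]
      rw [show ∀ x1 : Fin m → ℝ, ∑ i', r i' * x1 i'
          = ∑ i', (fun i' w => r i' * w) i' (x1 i') from fun _ => rfl]
      rw [sum_update_split (fun i' w => r i' * w) u i (u i + s),
        sum_split_base (fun i' w => r i' * w) u i]
      have hGa : G i (u i) = a := rfl
      rw [hGa]
      ring
    have hnorm : ‖(Function.update u i (u i + s), v) - ((u, v) : (Fin m → ℝ) × (Fin n → ℝ))‖
        = |s| := by
      have h1 : (Function.update u i (u i + s), v) - ((u, v) : (Fin m → ℝ) × (Fin n → ℝ))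
          = (Pi.single i s, (0 : Fin n → ℝ)) := by
        apply Prod.ext
        · simp only [Prod.fst_sub]
          funext i'
          by_cases h : i' = i
          · subst h; simp
          · simp [Function.update_of_ne h, Pi.single_eq_of_ne h]
        · simp
      rw [h1, Prod.norm_def]
      simp [Pi.norm_single, Real.norm_eq_abs]
    rw [hnorm, hfy] at hy
    linarith
  -- column marginals
  have hsumcomm : ∀ (u' : Fin m → ℝ) (v' : Fin n → ℝ),
      (∑ i, ∑ j, P i j * Real.exp (u' i + v' j))
        = ∑ j, ∑ i, P i j * Real.exp (u' i + v' j) := fun u' v' => Finset.sum_comm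
  have hcolm : ∀ j, |(∑ i, P i j * Real.exp (u i + v j)) - c j| ≤ ε := by
    intro j
    set b : ℝ := ∑ i, P i j * Real.exp (u i + v j) with hb
    apply slope_lemma (by positivity) hε0
    intro s
    have hy := hx (u, Function.update v j (v j + s))
    set G : Fin n → ℝ → ℝ := fun j' w => ∑ i, P i j' * Real.exp (u i + w) with hG
    have hGs : G j (v j + s) = b * Real.exp s := by
      rw [hG, hb, Finset.sum_mul]
      apply Finset.sum_congr rfl
      intro i _
      rw [show u i + (v j + s) = (u i + v j) + s by ring, Real.exp_add]
      ring
    have hfy : f (u, Function.update v j (v j + s)) = f (u, v) + b * Real.exp s - b - c j * s := by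
      rw [hf]
      simp only
      rw [hsumcomm u (Function.update v j (v j + s)), hsumcomm u v]
      rw [show ∀ x2 : Fin n → ℝ, ∑ j', ∑ i, P i j' * Real.exp (u i + x2 j') = ∑ j', G j' (x2 j')
        from fun _ => rfl]
      rw [sum_update_split G v j (v j + s), sum_split_base G v j, hGs]
      rw [show ∀ x2 : Fin n → ℝ, ∑ j', c j' * x2 j'
          = ∑ j', (fun j' w => c j' * w) j' (x2 j') from fun _ => rfl]
      rw [sum_update_split (fun j' w => c j' * w) v j (v j + s),
        sum_split_base (fun j' w => c j' * w) v j]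
      have hGb : G j (v j) = b := rfl
      rw [hGb]
      ring
    have hnorm : ‖(u, Function.update v j (v j + s)) - ((u, v) : (Fin m → ℝ) × (Fin n → ℝ))‖
        = |s| := by
      have h1 : (u, Function.update v j (v j + s)) - ((u, v) : (Fin m → ℝ) × (Fin n → ℝ))
          = ((0 : Fin m → ℝ), Pi.single j s) := by
        apply Prod.ext
        · simp
        · simp only [Prod.snd_sub]
          funext j'
          by_cases h : j' = j
          · subst h; simp
          · simp [Function.update_of_ne h, Pi.single_eq_of_ne h]
      rw [h1, Prod.norm_def]
      simp [Pi.norm_single, Real.norm_eq_abs]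
    rw [hnorm, hfy] at hy
    linarith
  -- assemble
  set bcol : Fin n → ℝ := fun j => ∑ i, P i j * Real.exp (u i + v j) with hbdef
  have hblow : ∀ j, 1 - ε ≤ bcol j := by
    intro j
    have h1 := hcolm j
    rw [abs_le] at h1
    have := hc1 j
    simp only [hbdef]
    linarith [h1.1]
  have hbpos' : ∀ j, 0 < bcol j := fun j => lt_of_lt_of_le (by linarith) (hblow j)
  refine ⟨fun i => Real.exp (u i), fun j => Real.exp (v j) / bcol j, fun i => Real.exp_pos _,
    fun j => div_pos (Real.exp_pos _) (hbpos' j), ?_, ?_⟩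
  · intro j
    have h1 : ∀ i : Fin m, Real.exp (u i) * (Real.exp (v j) / bcol j) * ‖A i j‖^2
        = (P i j * Real.exp (u i + v j)) / bcol j := by
      intro i
      rw [Real.exp_add, hP]
      ring
    simp only [h1]
    rw [← Finset.sum_div]
    have hnum : (∑ i, P i j * Real.exp (u i + v j)) = bcol j := rfl
    rw [hnum]
    exact div_self (ne_of_gt (hbpos' j))
  · intro i
    have h1 : ∀ j : Fin n, Real.exp (u i) * (Real.exp (v j) / bcol j) * ‖A i j‖^2
        = (P i j * Real.exp (u i + v j)) / bcol j := by
      intro j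
      rw [Real.exp_add, hP]
      ring
    simp only [h1]
    have h2 : ∑ j, (P i j * Real.exp (u i + v j)) / bcol j
        ≤ ∑ j, (P i j * Real.exp (u i + v j)) / (1 - ε) := by
      apply Finset.sum_le_sum
      intro j _
      exact div_le_div_of_nonneg_left (by positivity) (by linarith) (hblow j)
    have h3 : ∑ j, (P i j * Real.exp (u i + v j)) / (1 - ε)
        = (∑ j, P i j * Real.exp (u i + v j)) / (1 - ε) := by
      rw [Finset.sum_div]
    have h4 : (∑ j, P i j * Real.exp (u i + v j)) ≤ (q:ℝ)/k + ε := by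
      have h5 := hrowm i
      rw [abs_le] at h5
      have := hrq i
      linarith [h5.2]
    have h6 : (∑ j, P i j * Real.exp (u i + v j)) / (1 - ε) ≤ ((q:ℝ)/k + ε)/(1 - ε) := by
      exact div_le_div_of_nonneg_right h4 (by linarith)
    linarith

lemma herm_trace_sq_le_rank_mul_frobenius {N : ℕ} {M : Matrix (Fin N) (Fin N) ℂ}
    (hM : M.IsHermitian) :
    (M.trace.re) ^ 2 ≤ (M.rank : ℝ) * ∑ j, ∑ j', ‖M j j'‖ ^ 2 := by
  classical
  set lam : Fin N → ℝ := hM.eigenvalues with hlam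
  set U : Matrix (Fin N) (Fin N) ℂ := (hM.eigenvectorUnitary : Matrix (Fin N) (Fin N) ℂ) with hU
  set D : Matrix (Fin N) (Fin N) ℂ := diagonal (RCLike.ofReal ∘ lam) with hD
  have hsUU : star U * U = 1 := (Matrix.mem_unitaryGroup_iff').mp hM.eigenvectorUnitary.2
  have hspec : M = U * D * star U := hM.spectral_theorem
  -- trace of M
  have htr : M.trace = ∑ i, (lam i : ℂ) := by
    conv_lhs => rw [hspec]
    rw [Matrix.trace_mul_cycle, hsUU, Matrix.one_mul, hD, trace_diagonal]
    simp
  have htrre : M.trace.re = ∑ i, lam i := by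
    rw [htr, Complex.re_sum]
    simp
  -- M * M
  have hMM : M * M = U * (D * D) * star U := by
    conv_lhs => rw [hspec]
    calc (U*D*star U)*(U*D*star U) = U*(D*((star U*U)*(D*star U))) := by
          simp only [Matrix.mul_assoc]
      _ = U*(D*(D*star U)) := by rw [hsUU, Matrix.one_mul]
      _ = U*(D*D)*star U := by simp only [Matrix.mul_assoc]
  have htr2 : (M * M).trace = ∑ i, (lam i : ℂ) ^ 2 := by
    rw [hMM, Matrix.trace_mul_cycle, ← Matrix.mul_assoc, hsUU, Matrix.one_mul, hD,
      diagonal_mul_diagonal, trace_diagonal]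
    simp [sq]
  -- Frobenius
  have hfrob : (M * M).trace = ((∑ j, ∑ j', ‖M j j'‖ ^ 2 : ℝ) : ℂ) := by
    rw [Matrix.trace]
    push_cast
    apply Finset.sum_congr rfl
    intro j _
    rw [Matrix.diag, Matrix.mul_apply]
    apply Finset.sum_congr rfl
    intro i _
    have h1 : M i j = star (M j i) := by
      conv_lhs => rw [← hM.eq]
      rfl
    rw [h1, (by rfl : star (M j i) = (starRingEnd ℂ) (M j i)), Complex.mul_conj,
      Complex.normSq_eq_norm_sq]
    push_cast
    ring
  have hfrobre : ∑ j, ∑ j', ‖M j j'‖ ^ 2 = ∑ i, lam i ^ 2 := by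
    have := hfrob.symm.trans htr2
    have h2 := congrArg Complex.re this
    rw [Complex.ofReal_re, Complex.re_sum] at h2
    rw [h2]
    apply Finset.sum_congr rfl
    intro i _
    rw [← Complex.ofReal_pow, Complex.ofReal_re]
  -- rank = number of nonzero eigenvalues
  set S : Finset (Fin N) := univ.filter (fun i => lam i ≠ 0) with hS
  have hrank : (M.rank : ℝ) = (S.card : ℝ) := by
    rw [hM.rank_eq_card_non_zero_eigs]
    norm_cast
    rw [Fintype.card_subtype]
  -- Cauchy–Schwarz
  have hCS : (∑ i, lam i) ^ 2 ≤ (S.card : ℝ) * ∑ i, lam i ^ 2 := by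
    have h1 : ∑ i, lam i = ∑ i ∈ S, lam i := by
      rw [hS]
      rw [Finset.sum_filter_ne_zero]
    have h2 := sum_mul_sq_le_sq_mul_sq S (fun _ => (1:ℝ)) lam
    simp only [one_mul, one_pow] at h2
    have h3 : ∑ _i ∈ S, (1:ℝ) = (S.card : ℝ) := by simp
    have h4 : ∑ i ∈ S, lam i ^ 2 ≤ ∑ i, lam i ^ 2 := by
      apply Finset.sum_le_sum_of_subset_of_nonneg (Finset.subset_univ S)
      intro i _ _
      positivity
    calc (∑ i, lam i)^2 = (∑ i ∈ S, lam i)^2 := by rw [h1]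
      _ ≤ (∑ _i ∈ S, (1:ℝ)) * ∑ i ∈ S, lam i ^ 2 := h2
      _ = (S.card : ℝ) * ∑ i ∈ S, lam i ^ 2 := by rw [h3]
      _ ≤ (S.card : ℝ) * ∑ i, lam i ^ 2 := by
          apply mul_le_mul_of_nonneg_left h4 (Nat.cast_nonneg _)
  rw [htrre, hfrobre, hrank]
  exact hCS

/-- `A` is a `(q,k,t)`-design matrix: every row has at most `q` nonzero entries,
every column has at least `k` nonzero entries, and the supports of every two
distinct columns intersect in at most `t` rows. -/
def IsDesignMatrix {m n : ℕ} (A : Matrix (Fin m) (Fin n) ℂ) (q k t : ℕ) : Prop :=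
  (∀ i : Fin m, (Finset.univ.filter fun j => A i j ≠ 0).card ≤ q) ∧
  (∀ j : Fin n, k ≤ (Finset.univ.filter fun i => A i j ≠ 0).card) ∧
  (∀ j₁ j₂ : Fin n, j₁ ≠ j₂ →
    (Finset.univ.filter fun i => A i j₁ ≠ 0 ∧ A i j₂ ≠ 0).card ≤ t)

lemma star_mul_self_complex (z : ℂ) : star z * z = ((‖z‖^2 : ℝ) : ℂ) := by
  have h1 : star z * z = z * (starRingEnd ℂ) z := by
    rw [mul_comm]; rfl
  rw [h1, Complex.mul_conj, Complex.normSq_eq_norm_sq]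

lemma main_eps {m n q k t : ℕ} (hk : 0 < k) (hn : 0 < n) (hm : 0 < m)
    (A : Matrix (Fin m) (Fin n) ℂ) (hA : IsDesignMatrix A q k t)
    {ε : ℝ} (hε0 : 0 < ε) (hε1 : ε < 1) :
    (n:ℝ) - ((n:ℝ) * ((t:ℝ) * (((q:ℝ)/k + ε)/(1-ε))) / 2)^2 ≤ (A.rank : ℝ) := by
  obtain ⟨hrow, hcol, hint⟩ := hA
  obtain ⟨ρ, γ, hρ, hγ, hcol1, hrowQ⟩ := scaling_exists hk hn hm A hrow hcol hε0 hε1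
  set Q : ℝ := ((q:ℝ)/k + ε)/(1-ε) with hQ
  have hQ0 : 0 ≤ Q := by
    rw [hQ]
    have h1 : (0:ℝ) ≤ (q:ℝ)/k + ε := by positivity
    have h2 : (0:ℝ) < 1 - ε := by linarith
    positivity
  set A' : Matrix (Fin m) (Fin n) ℂ :=
    Matrix.diagonal (fun i => ((Real.sqrt (ρ i) : ℝ) : ℂ)) * A *
      Matrix.diagonal (fun j => ((Real.sqrt (γ j) : ℝ) : ℂ)) with hA'
  have hA'app : ∀ i j, A' i j = (Real.sqrt (ρ i) : ℂ) * A i j * (Real.sqrt (γ j) : ℂ) := by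
    intro i j
    rw [hA', Matrix.mul_diagonal, Matrix.diagonal_mul]
  have hA'norm : ∀ i j, ‖A' i j‖^2 = ρ i * γ j * ‖A i j‖^2 := by
    intro i j
    rw [hA'app, norm_mul, norm_mul, Complex.norm_real, Complex.norm_real,
      Real.norm_eq_abs, Real.norm_eq_abs, abs_of_nonneg (Real.sqrt_nonneg _),
      abs_of_nonneg (Real.sqrt_nonneg _)]
    rw [mul_pow, mul_pow, Real.sq_sqrt (hρ i).le, Real.sq_sqrt (hγ j).le]
    ring
  have hA'zero : ∀ i j, A i j = 0 → A' i j = 0 := by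
    intro i j h
    rw [hA'app, h]
    ring
  set M : Matrix (Fin n) (Fin n) ℂ := A'.conjTranspose * A' with hM
  have hherm : M.IsHermitian := Matrix.isHermitian_conjTranspose_mul_self A'
  have hMapp : ∀ j j', M j j' = ∑ i, star (A' i j) * A' i j' := by
    intro j j'
    rw [hM, Matrix.mul_apply]
    apply Finset.sum_congr rfl
    intro i _
    rw [Matrix.conjTranspose_apply]
  have hdiag : ∀ j, M j j = 1 := by
    intro j
    rw [hMapp]
    have h1 : ∀ i : Fin m, star (A' i j) * A' i j = ((‖A' i j‖^2 : ℝ) : ℂ) :=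
      fun i => star_mul_self_complex _
    simp only [h1, hA'norm]
    rw [← Complex.ofReal_sum]
    rw [hcol1 j]
    norm_num
  have htrace : M.trace.re = (n:ℝ) := by
    rw [Matrix.trace]
    have h1 : ∀ j, M.diag j = 1 := fun j => hdiag j
    rw [show M.diag = fun j => M j j from rfl]
    simp only [hdiag]
    simp
  -- off-diagonal bound
  have hoff : ∀ j j', j ≠ j' → ‖M j j'‖ ≤ (t:ℝ) * Q / 2 := by
    intro j j' hne
    rw [hMapp]
    calc ‖∑ i, star (A' i j) * A' i j'‖ ≤ ∑ i, ‖star (A' i j) * A' i j'‖ :=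
          norm_sum_le _ _
      _ = ∑ i, ‖A' i j‖ * ‖A' i j'‖ := by
          apply Finset.sum_congr rfl
          intro i _
          rw [norm_mul, norm_star]
      _ = ∑ i ∈ Finset.univ.filter (fun i => A i j ≠ 0 ∧ A i j' ≠ 0), ‖A' i j‖ * ‖A' i j'‖ := by
          symm
          apply Finset.sum_subset (Finset.filter_subset _ _)
          intro i _ hi
          simp only [Finset.mem_filter, Finset.mem_univ, true_and, not_and_or, not_not] at hi
          rcases hi with h | h
          · rw [hA'zero i j h, norm_zero, zero_mul]
          · rw [hA'zero i j' h, norm_zero, mul_zero]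
      _ ≤ ∑ i ∈ Finset.univ.filter (fun i => A i j ≠ 0 ∧ A i j' ≠ 0), Q / 2 := by
          apply Finset.sum_le_sum
          intro i _
          have hAM : ‖A' i j‖ * ‖A' i j'‖ ≤ (‖A' i j‖^2 + ‖A' i j'‖^2)/2 := by
            nlinarith [sq_nonneg (‖A' i j‖ - ‖A' i j'‖)]
          have hpair : ‖A' i j‖^2 + ‖A' i j'‖^2 ≤ Q := by
            have h2 : ∑ j'' ∈ ({j, j'} : Finset (Fin n)), ρ i * γ j'' * ‖A i j''‖^2
                ≤ ∑ j'', ρ i * γ j'' * ‖A i j''‖^2 := by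
              apply Finset.sum_le_sum_of_subset_of_nonneg (Finset.subset_univ _)
              intro j'' _ _
              have := (hρ i).le
              have := (hγ j'').le
              positivity
            rw [Finset.sum_pair hne] at h2
            rw [hA'norm, hA'norm]
            exact le_trans h2 (hrowQ i)
          linarith
      _ = ((Finset.univ.filter (fun i => A i j ≠ 0 ∧ A i j' ≠ 0)).card : ℝ) * (Q/2) := by
          rw [Finset.sum_const, nsmul_eq_mul]
      _ ≤ (t:ℝ) * (Q/2) := by
          apply mul_le_mul_of_nonneg_right _ (by positivity)
          exact_mod_cast hint j j' hne
      _ = (t:ℝ) * Q / 2 := by ring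
  -- Frobenius bound
  set τ : ℝ := (t:ℝ) * Q / 2 with hτ
  have hτ0 : 0 ≤ τ := by rw [hτ]; positivity
  have hfrob : ∑ j, ∑ j', ‖M j j'‖^2 ≤ (n:ℝ) + ((n:ℝ)*τ)^2 := by
    have h1 : ∀ j j' : Fin n, ‖M j j'‖^2 ≤ (if j' = j then 1 else 0) + τ^2 := by
      intro j j'
      by_cases h : j' = j
      · subst h
        rw [hdiag]
        simp
        positivity
      · have h2 := hoff j j' (fun hh => h hh.symm)
        have h3 : ‖M j j'‖^2 ≤ τ^2 := by
          nlinarith [norm_nonneg (M j j')]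
        simp only [h, if_false]
        linarith
    calc ∑ j, ∑ j', ‖M j j'‖^2 ≤ ∑ j : Fin n, ∑ j' : Fin n, ((if j' = j then 1 else 0) + τ^2) := by
          apply Finset.sum_le_sum
          intro j _
          exact Finset.sum_le_sum fun j' _ => h1 j j'
      _ = ∑ j : Fin n, (1 + (n:ℝ) * τ^2) := by
          apply Finset.sum_congr rfl
          intro j _
          rw [Finset.sum_add_distrib, Finset.sum_ite_eq' Finset.univ j (fun _ => (1:ℝ))]
          simp [Finset.card_univ]
      _ = (n:ℝ) * (1 + (n:ℝ)*τ^2) := by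
          rw [Finset.sum_const, nsmul_eq_mul, Finset.card_univ]
          simp
      _ = (n:ℝ) + ((n:ℝ)*τ)^2 := by ring
  -- rank comparison
  have hrk : (M.rank : ℝ) ≤ (A.rank : ℝ) := by
    have h1 : M.rank ≤ A'.rank := Matrix.rank_mul_le_right _ _
    have h2 : A'.rank ≤ A.rank := by
      rw [hA']
      calc (Matrix.diagonal (fun i => ((Real.sqrt (ρ i) : ℝ) : ℂ)) * A *
          Matrix.diagonal (fun j => ((Real.sqrt (γ j) : ℝ) : ℂ))).rank
          ≤ (Matrix.diagonal (fun i => ((Real.sqrt (ρ i) : ℝ) : ℂ)) * A).rank :=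
            Matrix.rank_mul_le_left _ _
        _ ≤ A.rank := Matrix.rank_mul_le_right _ _
    exact_mod_cast le_trans h1 h2
  have hkey := herm_trace_sq_le_rank_mul_frobenius hherm
  rw [htrace] at hkey
  have hnR : (0:ℝ) < n := by exact_mod_cast hn
  have hfin : (n:ℝ)^2 ≤ (A.rank : ℝ) * ((n:ℝ) + ((n:ℝ)*τ)^2) := by
    have h1 : (M.rank : ℝ) * (∑ j, ∑ j', ‖M j j'‖^2) ≤ (A.rank:ℝ) * ((n:ℝ) + ((n:ℝ)*τ)^2) := by
      apply mul_le_mul hrk hfrob ?_ (by positivity : (0:ℝ) ≤ ((A.rank : ℕ):ℝ))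
      apply Finset.sum_nonneg
      intro j _
      apply Finset.sum_nonneg
      intro j' _
      positivity
    linarith
  have hgoal : (n:ℝ) - ((n:ℝ)*τ)^2 ≤ (A.rank : ℝ) := by
    nlinarith [sq_nonneg ((n:ℝ)*τ), hfin, hnR, (by positivity : (0:ℝ) ≤ ((A.rank:ℕ):ℝ))]
  calc (n:ℝ) - ((n:ℝ) * ((t:ℝ) * Q) / 2)^2 = (n:ℝ) - ((n:ℝ)*τ)^2 := by rw [hτ]; ring_nf
    _ ≤ (A.rank : ℝ) := hgoal

/-- Rank bound for design matrices: if `m ≥ n` and `A` is an `m × n` complex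
`(q,k,t)`-design matrix, then `rank(A) ≥ n - (q t n / (2k))²`. -/
theorem rank_of_design_matrix {m n q k t : ℕ} (hmn : n ≤ m) (hk : 0 < k)
    (A : Matrix (Fin m) (Fin n) ℂ) (hA : IsDesignMatrix A q k t) :
    (n : ℝ) - ((q : ℝ) * t * n / (2 * k)) ^ 2 ≤ (A.rank : ℝ) := by
  rcases Nat.eq_zero_or_pos n with hn | hn
  · subst hn
    simp
  · have hm : 0 < m := lt_of_lt_of_le hn hmn
    set F : ℝ → ℝ := fun ε => (n:ℝ) - ((n:ℝ) * ((t:ℝ) * (((q:ℝ)/k + ε)/(1-ε))) / 2)^2 with hF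
    have hcont : ContinuousAt F 0 := by
      have h1 : ContinuousAt (fun ε : ℝ => ((q:ℝ)/k + ε)/(1-ε)) 0 := by
        apply ContinuousAt.div
        · fun_prop
        · fun_prop
        · norm_num
      apply ContinuousAt.sub continuousAt_const
      apply ContinuousAt.pow
      apply ContinuousAt.div_const
      exact continuousAt_const.mul (continuousAt_const.mul h1)
    have htend : Tendsto F (nhdsWithin 0 (Set.Ioi 0)) (nhds (F 0)) :=
      hcont.continuousWithinAt.tendsto
    have hev : ∀ᶠ ε in nhdsWithin (0:ℝ) (Set.Ioi 0), F ε ≤ (A.rank : ℝ) := by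
      filter_upwards [Ioo_mem_nhdsGT_of_mem (Set.mem_Ico.mpr ⟨le_refl (0:ℝ), zero_lt_one⟩)]
        with ε hε
      exact main_eps hk hn hm A hA hε.1 hε.2
    have hle : F 0 ≤ (A.rank : ℝ) := le_of_tendsto htend hev
    have hF0 : F 0 = (n : ℝ) - ((q : ℝ) * t * n / (2 * k)) ^ 2 := by
      rw [hF]
      have hkR : ((k:ℝ)) ≠ 0 := by positivity
      field_simp
      ring
    rwa [hF0] at hle
end

section
/- Let A be an m×n complex matrix satisfying Property-S. Then for every ε > 0 there exist positive reals ρ₁,…,ρ_m and γ₁,…,γ_n such that the scaled matrix A' with entries a'_{ij} = ρ_i γ_j a_{ij} satisfies: for every row i, ∑_j |a'_{ij}|² ≤ 1 + ε, and for every column j, ∑_i |a'_{ij}|² ≥ m/n − ε. -/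
open scoped Classical BigOperators

open Finset

lemma exists_B {m n : ℕ} (hm : 0 < m) (hn : 0 < n) (A : Matrix (Fin m) (Fin n) ℂ)
    (hA : PropertyS A) :
    ∃ B : Fin m → Fin n → ℝ, (∀ i j, 0 ≤ B i j) ∧ (∀ i j, A i j = 0 → B i j = 0) ∧
      (∀ i, ∑ j, B i j = 1) ∧ (∀ j, ∑ i, B i j = (m : ℝ) / n) := by
  classical
  set t : Fin m × Fin n → Finset (Fin n × Fin m) :=
    fun s => (univ.filter fun j => A s.1 j ≠ 0) ×ˢ univ with ht
  have hall : ∀ S : Finset (Fin m × Fin n), S.card ≤ (S.biUnion t).card := by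
    intro S
    set R : Finset (Fin m) := S.image Prod.fst with hR
    set N : Finset (Fin n) := R.biUnion (fun i => univ.filter fun j => A i j ≠ 0) with hN
    have hSsub : S ⊆ R ×ˢ univ := by
      intro s hs
      rw [mem_product]
      exact ⟨mem_image_of_mem _ hs, mem_univ _⟩
    have h1 : S.card ≤ R.card * n := by
      have := card_le_card hSsub
      simpa [card_product] using this
    have h2 : S.biUnion t = N ×ˢ univ := by
      ext x
      constructor
      · intro hx
        rw [mem_biUnion] at hx
        obtain ⟨s, hs, hx⟩ := hx
        rw [mem_product] at hx ⊢
        refine ⟨?_, mem_univ _⟩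
        rw [hN, mem_biUnion]
        exact ⟨s.1, mem_image_of_mem _ hs, hx.1⟩
      · intro hx
        rw [mem_product, hN, mem_biUnion] at hx
        obtain ⟨⟨i, hiR, hxi⟩, -⟩ := hx
        rw [hR, mem_image] at hiR
        obtain ⟨s, hs, rfl⟩ := hiR
        rw [mem_biUnion]
        exact ⟨s, hs, by rw [mem_product]; exact ⟨hxi, mem_univ _⟩⟩
    have h3 : (R.card : ℝ) / m ≤ (N.card : ℝ) / n := by
      have hz : ∀ i ∈ R, ∀ j ∈ Nᶜ, A i j = 0 := by
        intro i hi j hj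
        rw [mem_compl, hN, mem_biUnion] at hj
        push_neg at hj
        by_contra hne
        exact hj i hi (by simpa using hne)
      have hcard := hA R Nᶜ hz
      simp only [Fintype.card_fin] at hcard
      have hcc : (Nᶜ.card : ℝ) = n - N.card := by
        have hNle : N.card ≤ n := by simpa using card_le_card (subset_univ N)
        rw [card_compl, Fintype.card_fin, Nat.cast_sub hNle]
      rw [hcc] at hcard
      have hn' : (0:ℝ) < n := by exact_mod_cast hn
      have : (n - (N.card:ℝ)) / n = 1 - N.card / n := by field_simp
      rw [this] at hcard
      linarith
    have h4 : R.card * n ≤ N.card * m := by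
      have hm' : (0:ℝ) < m := by exact_mod_cast hm
      have hn' : (0:ℝ) < n := by exact_mod_cast hn
      rw [div_le_div_iff₀ hm' hn'] at h3
      exact_mod_cast h3
    calc S.card ≤ R.card * n := h1
      _ ≤ N.card * m := h4
      _ ≤ (S.biUnion t).card := by
          rw [h2, card_product]
          simp
  obtain ⟨f, hfinj, hft⟩ := (Finset.all_card_le_biUnion_card_iff_exists_injective t).mp hall
  have hfbij : Function.Bijective f :=
    (Fintype.bijective_iff_injective_and_card f).mpr ⟨hfinj, by simp [Fintype.card_prod, mul_comm]⟩
  refine ⟨fun i j => ((univ.filter fun k : Fin n => (f (i, k)).1 = j).card : ℝ) / n,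
    fun i j => by positivity, ?_, ?_, ?_⟩
  · intro i j hij
    have : (univ.filter fun k : Fin n => (f (i, k)).1 = j) = ∅ := by
      rw [eq_empty_iff_forall_notMem]
      intro k hk
      rw [mem_filter] at hk
      have := hft (i, k)
      rw [ht, mem_product, mem_filter] at this
      exact this.1.2 (hk.2 ▸ hij)
    simp [this]
  · intro i
    rw [← Finset.sum_div]
    have key : ∑ j : Fin n, ((univ.filter fun k : Fin n => (f (i, k)).1 = j).card : ℝ)
        = (n : ℝ) := by
      rw [← Nat.cast_sum]
      congr 1
      have := Finset.card_eq_sum_card_fiberwise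
        (f := fun k : Fin n => (f (i, k)).1) (s := univ) (t := univ) (fun x _ => mem_univ _)
      simpa using this.symm
    rw [key]
    field_simp
  · intro j
    rw [← Finset.sum_div]
    have key : ∑ i : Fin m, ((univ.filter fun k : Fin n => (f (i, k)).1 = j).card : ℝ)
        = (m : ℝ) := by
      rw [← Nat.cast_sum]
      congr 1
      set P : Finset (Fin m × Fin n) := univ.filter (fun s => (f s).1 = j) with hP
      have step1 : ∀ i : Fin m, (univ.filter fun k : Fin n => (f (i, k)).1 = j).card
          = (P.filter fun s => s.1 = i).card := by
        intro i
        apply Finset.card_bij (fun k _ => (i, k))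
        · intro k hk
          rw [mem_filter] at hk ⊢
          exact ⟨by rw [hP, mem_filter]; exact ⟨mem_univ _, hk.2⟩, rfl⟩
        · intro a ha b hb hab
          simpa using congrArg Prod.snd hab
        · intro s hs
          rw [mem_filter] at hs
          obtain ⟨hsP, hsi⟩ := hs
          rw [hP, mem_filter] at hsP
          have hs' : (i, s.2) = s := by rw [← hsi]
          refine ⟨s.2, ?_, hs'⟩
          rw [mem_filter]
          exact ⟨mem_univ _, by rw [hs']; exact hsP.2⟩
      have step2 : P.card = ∑ i : Fin m, (P.filter fun s => s.1 = i).card :=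
        Finset.card_eq_sum_card_fiberwise (fun x _ => mem_univ _)
      have step3 : P.card = m := by
        have : P.card = (univ.filter fun s : Fin n × Fin m => s.1 = j).card := by
          apply Finset.card_bij (fun s _ => f s)
          · intro s hs
            simp only [hP, mem_filter, mem_univ, true_and] at hs ⊢
            exact hs
          · intro a _ b _ hab
            exact hfinj hab
          · intro s hs
            simp only [mem_filter, mem_univ, true_and] at hs
            obtain ⟨a, rfl⟩ := hfbij.2 s
            exact ⟨a, by simp [hP, hs], rfl⟩
        rw [this]
        have : (univ.filter fun s : Fin n × Fin m => s.1 = j) = {j} ×ˢ univ := by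
          ext s
          rw [mem_filter, mem_product, mem_singleton]
          simp only [mem_univ, true_and, and_true]
        rw [this, card_product]
        simp
      exact (Finset.sum_congr rfl (fun i _ => step1 i)).trans (step2.symm.trans step3)
    rw [key]

-- pointwise lower bound  p * exp t - b * t ≥ (if b = 0 then 0 else b - b * log (b/p))
lemma ptwise (p b t : ℝ) (hp : 0 ≤ p) (hb : 0 ≤ b) (hpb : p = 0 → b = 0) :
    (if b = 0 then 0 else b - b * Real.log (b / p)) ≤ p * Real.exp t - b * t := by
  by_cases h : b = 0
  · simp [h]
    positivity
  · rw [if_neg h]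
    have hb' : 0 < b := lt_of_le_of_ne hb (Ne.symm h)
    have hp' : 0 < p := by
      rcases lt_or_eq_of_le hp with h' | h'
      · exact h'
      · exact absurd (hpb h'.symm) h
    have hexp : p * Real.exp t = b * Real.exp (t - Real.log (b / p)) := by
      rw [Real.exp_sub, Real.exp_log (by positivity)]
      field_simp
    have h1 : (t - Real.log (b / p)) + 1 ≤ Real.exp (t - Real.log (b / p)) :=
      Real.add_one_le_exp _
    have h2 : b * ((t - Real.log (b / p)) + 1) ≤ b * Real.exp (t - Real.log (b / p)) :=
      mul_le_mul_of_nonneg_left h1 hb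
    rw [← hexp] at h2
    nlinarith [h2]

lemma sq_bound (z e : ℝ) (he : 0 < e) (hz : z ^ 2 ≤ e ^ 2) : -e ≤ z ∧ z ≤ e := by
  constructor <;> nlinarith [sq_nonneg (z - e), sq_nonneg (z + e)]

set_option maxHeartbeats 2000000 in
lemma key {m n : ℕ} (p B : Fin m → Fin n → ℝ)
    (hp : ∀ i j, 0 ≤ p i j)
    (hB0 : ∀ i j, 0 ≤ B i j)
    (hsupp : ∀ i j, p i j = 0 → B i j = 0)
    (hrow : ∀ i, ∑ j, B i j = 1) (hcol : ∀ j, ∑ i, B i j = (m : ℝ) / n)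
    (ε : ℝ) (hε : 0 < ε) :
    ∃ (u : Fin m → ℝ) (v : Fin n → ℝ),
      (∀ i, ∑ j, p i j * Real.exp (u i + v j) ≤ 1 + ε) ∧
      (∀ j, (m : ℝ) / n - ε ≤ ∑ i, p i j * Real.exp (u i + v j)) := by
  classical
  set f : ((Fin m → ℝ) × (Fin n → ℝ)) → ℝ :=
    fun x => (∑ i, ∑ j, p i j * Real.exp (x.1 i + x.2 j)) - (∑ i, x.1 i)
      - ((m : ℝ) / n) * ∑ j, x.2 j with hf
  set L : ℝ := ∑ i, ∑ j,
    (if B i j = 0 then 0 else B i j - B i j * Real.log (B i j / p i j)) with hL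
  -- lower bound for f
  have hfeq : ∀ x, f x = ∑ i, ∑ j,
      (p i j * Real.exp (x.1 i + x.2 j) - B i j * (x.1 i + x.2 j)) := by
    intro x
    have e1 : ∑ i, ∑ j, B i j * x.1 i = ∑ i, x.1 i := by
      apply Finset.sum_congr rfl
      intro i _
      rw [← Finset.sum_mul, hrow, one_mul]
    have e2 : ∑ i, ∑ j, B i j * x.2 j = ((m : ℝ) / n) * ∑ j, x.2 j := by
      rw [Finset.sum_comm, Finset.mul_sum]
      apply Finset.sum_congr rfl
      intro j _
      rw [← Finset.sum_mul, hcol]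
    have expand : ∑ i, ∑ j, (p i j * Real.exp (x.1 i + x.2 j) - B i j * (x.1 i + x.2 j))
        = (∑ i, ∑ j, p i j * Real.exp (x.1 i + x.2 j))
          - (∑ i, ∑ j, B i j * x.1 i) - (∑ i, ∑ j, B i j * x.2 j) := by
      rw [← Finset.sum_sub_distrib]
      simp_rw [← Finset.sum_sub_distrib, mul_add]
      apply Finset.sum_congr rfl
      intro i _
      apply Finset.sum_congr rfl
      intro j _
      ring
    rw [expand, e1, e2, hf]
  have hf_lb : ∀ x, L ≤ f x := by
    intro x
    rw [hfeq x, hL]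
    apply Finset.sum_le_sum
    intro i _
    apply Finset.sum_le_sum
    intro j _
    exact ptwise (p i j) (B i j) (x.1 i + x.2 j) (hp i j) (hB0 i j) (hsupp i j)
  -- the regularized functional
  set D : ℝ := f 0 - L with hD
  have hD0 : 0 ≤ D := by rw [hD]; linarith [hf_lb 0]
  set δ : ℝ := ε ^ 2 / (4 * (D + 1)) with hδ
  have hδ0 : 0 < δ := by rw [hδ]; positivity
  set Q : ((Fin m → ℝ) × (Fin n → ℝ)) → ℝ :=
    fun x => (∑ i, (x.1 i) ^ 2) + (∑ j, (x.2 j) ^ 2) with hQ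
  set F : ((Fin m → ℝ) × (Fin n → ℝ)) → ℝ := fun x => f x + δ * Q x with hF
  have hFdef : ∀ y, F y = f y + δ * Q y := fun _ => rfl
  have hQdef : ∀ y : (Fin m → ℝ) × (Fin n → ℝ), Q y = (∑ i, (y.1 i) ^ 2) + (∑ j, (y.2 j) ^ 2) :=
    fun _ => rfl
  have hFcont : Continuous F := by
    rw [hF, hf, hQ]
    fun_prop
  have hQnorm : ∀ x : (Fin m → ℝ) × (Fin n → ℝ), ‖x‖ ^ 2 ≤ Q x := by
    intro x
    have hQ0 : 0 ≤ Q x := by rw [hQ]; positivity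
    have habs : ∀ z : ℝ, z ^ 2 ≤ Q x → ‖z‖ ≤ Real.sqrt (Q x) := by
      intro z hz
      rw [Real.norm_eq_abs, ← Real.sqrt_sq_eq_abs]
      exact Real.sqrt_le_sqrt hz
    have h2a : (0:ℝ) ≤ ∑ j, (x.2 j) ^ 2 := by positivity
    have h1a : (0:ℝ) ≤ ∑ i, (x.1 i) ^ 2 := by positivity
    have hle : ‖x‖ ≤ Real.sqrt (Q x) := by
      rw [Prod.norm_def, max_le_iff]
      constructor
      · rw [pi_norm_le_iff_of_nonneg (Real.sqrt_nonneg _)]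
        intro i
        refine habs _ ?_
        have h1 : (x.1 i) ^ 2 ≤ ∑ i', (x.1 i') ^ 2 :=
          Finset.single_le_sum (f := fun i' => x.1 i' ^ 2) (fun _ _ => sq_nonneg _) (mem_univ i)
        rw [hQdef x]; linarith
      · rw [pi_norm_le_iff_of_nonneg (Real.sqrt_nonneg _)]
        intro j
        refine habs _ ?_
        have h1 : (x.2 j) ^ 2 ≤ ∑ j', (x.2 j') ^ 2 :=
          Finset.single_le_sum (f := fun j' => x.2 j' ^ 2) (fun _ _ => sq_nonneg _) (mem_univ j)
        rw [hQdef x]; linarith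
    calc ‖x‖ ^ 2 ≤ Real.sqrt (Q x) ^ 2 := by
          apply pow_le_pow_left₀ (norm_nonneg _) hle
      _ = Q x := Real.sq_sqrt hQ0
  -- minimizer of F over a big closed ball is a global minimizer
  set Rr : ℝ := Real.sqrt (D / δ) + 1 with hRr
  have hRr0 : 0 ≤ Rr := by positivity
  obtain ⟨z, hzK, hzmin⟩ := (isCompact_closedBall (0 : (Fin m → ℝ) × (Fin n → ℝ)) Rr).exists_isMinOn
    (Metric.nonempty_closedBall.mpr hRr0) hFcont.continuousOn
  have hzglob : ∀ y, F z ≤ F y := by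
    intro y
    by_cases hy : y ∈ Metric.closedBall (0 : (Fin m → ℝ) × (Fin n → ℝ)) Rr
    · exact hzmin hy
    · have h0K : (0 : (Fin m → ℝ) × (Fin n → ℝ)) ∈ Metric.closedBall 0 Rr := by
        simp [hRr0]
      have hF0 : F z ≤ F 0 := hzmin h0K
      have hy' : Rr < ‖y‖ := by
        rw [Metric.mem_closedBall, dist_zero_right] at hy
        linarith [not_le.mp hy]
      have hQy : Rr ^ 2 ≤ Q y := le_trans (pow_le_pow_left₀ hRr0 hy'.le 2) (hQnorm y)
      have hRr2 : D / δ + 1 ≤ Rr ^ 2 := by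
        rw [hRr]
        have h1 : Real.sqrt (D / δ) ^ 2 = D / δ := Real.sq_sqrt (by positivity)
        nlinarith [Real.sqrt_nonneg (D / δ)]
      have hQ0' : Q (0 : (Fin m → ℝ) × (Fin n → ℝ)) = 0 := by simp [hQ]
      have hFy : F 0 < F y := by
        have h1 : L + δ * Q y ≤ F y := by
          rw [hFdef y]
          have := hf_lb y
          linarith
        have h2 : D + δ ≤ δ * Q y := by
          have h3 : δ * (D / δ + 1) ≤ δ * Q y :=
            mul_le_mul_of_nonneg_left (le_trans hRr2 hQy) hδ0.le
          have h4 : δ * (D / δ + 1) = D + δ := by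
            rw [mul_add, mul_one, mul_comm δ (D / δ), div_mul_cancel₀ _ (ne_of_gt hδ0)]
          exact h4 ▸ h3
        have h5 : F 0 = f 0 := by rw [hFdef 0, hQ0']; ring
        rw [hFdef y] at *
        have hy2 := hf_lb y
        rw [h5]
        rw [hD] at h2
        linarith
      linarith
  -- bounds on the coordinates of the minimizer
  have hzQ : δ * Q z ≤ D := by
    have h1 : F z ≤ F 0 := hzglob 0
    have hQ0' : Q (0 : (Fin m → ℝ) × (Fin n → ℝ)) = 0 := by simp [hQ]
    have h2 : L + δ * Q z ≤ F z := by
      rw [hFdef z]; linarith [hf_lb z]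
    rw [hFdef 0, hFdef z, hQ0'] at h1
    rw [hFdef z] at h2
    rw [hD]
    linarith
  obtain ⟨u, v⟩ := z
  have hδval : δ * (4 * (D + 1)) = ε ^ 2 := by
    rw [hδ]; field_simp
  refine ⟨u, v, ?_, ?_⟩
  · -- rows
    intro i
    set c : ℝ := (∑ i' ∈ univ.erase i, ∑ j, p i' j * Real.exp (u i' + v j))
        - (∑ i' ∈ univ.erase i, u i') - ((m : ℝ) / n) * ∑ j, v j
        + δ * ((∑ i' ∈ univ.erase i, (u i') ^ 2) + ∑ j, (v j) ^ 2) with hc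
    set g : ℝ → ℝ := fun s => (∑ j, p i j * Real.exp (s + v j)) - s + δ * s ^ 2 + c with hg
    have hsplit : ∀ (H : Fin m → ℝ → ℝ) (s : ℝ),
        ∑ i', H i' (Function.update u i s i')
          = H i s + ∑ i' ∈ univ.erase i, H i' (u i') := by
      intro H s
      rw [← Finset.add_sum_erase univ (fun i' => H i' (Function.update u i s i')) (mem_univ i)]
      congr 1
      · rw [Function.update_self]
      · exact Finset.sum_congr rfl
          (fun i' hi' => by rw [Function.update_of_ne (Finset.ne_of_mem_erase hi')])
    have hgF : ∀ s, F (Function.update u i s, v) = g s := by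
      intro s
      show (∑ i', ∑ j, p i' j * Real.exp (Function.update u i s i' + v j))
          - (∑ i', Function.update u i s i') - ((m : ℝ) / n) * ∑ j, v j
          + δ * ((∑ i', (Function.update u i s i') ^ 2) + ∑ j, (v j) ^ 2) = g s
      rw [hsplit (fun i' z => ∑ j, p i' j * Real.exp (z + v j)) s,
        hsplit (fun _ z => z) s, hsplit (fun _ z => z ^ 2) s, hg, hc]
      ring
    have hmin : ∀ s, g (u i) ≤ g s := by
      intro s
      have h0 : Function.update u i (u i) = u := Function.update_eq_self i u
      have h3 : g (u i) = F (u, v) := by rw [← hgF (u i), h0]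
      rw [h3, ← hgF s]
      exact hzglob _
    have hloc : IsLocalMin g (u i) := Filter.Eventually.of_forall hmin
    have hderiv : HasDerivAt g
        ((∑ j, p i j * Real.exp (u i + v j)) - 1 + δ * (2 * u i)) (u i) := by
      have h1 : HasDerivAt (fun s => ∑ j, p i j * Real.exp (s + v j))
          (∑ j, p i j * Real.exp (u i + v j)) (u i) := by
        apply HasDerivAt.fun_sum
        intro j _
        have h2 : HasDerivAt (fun s : ℝ => s + v j) 1 (u i) := (hasDerivAt_id _).add_const _
        simpa using (h2.exp.const_mul (p i j))
      have h5 : HasDerivAt (fun s : ℝ => s) 1 (u i) := hasDerivAt_id _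
      have h6 : HasDerivAt (fun s : ℝ => s ^ 2) (2 * u i) (u i) := by
        simpa using hasDerivAt_pow 2 (u i)
      have h8 := ((h1.fun_sub h5).fun_add (h6.const_mul δ)).add_const c
      rw [hg]
      convert h8 using 2
    have hstat : (∑ j, p i j * Real.exp (u i + v j)) - 1 + δ * (2 * u i) = 0 := by
      have hd0 := hloc.deriv_eq_zero
      rw [hderiv.deriv] at hd0
      exact hd0
    have hui2 : δ * (u i) ^ 2 ≤ D := by
      have h1 : (u i) ^ 2 ≤ Q (u, v) := by
        rw [hQdef]
        have h2 : (u i) ^ 2 ≤ ∑ i', (u i') ^ 2 :=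
          Finset.single_le_sum (f := fun i' => u i' ^ 2) (fun _ _ => sq_nonneg _) (mem_univ i)
        have h3 : (0:ℝ) ≤ ∑ j, (v j) ^ 2 := by positivity
        linarith
      have h4 := mul_le_mul_of_nonneg_left h1 hδ0.le
      linarith [hzQ]
    have hz2 : (2 * δ * u i) ^ 2 ≤ ε ^ 2 := by
      have h1 : (2 * δ * u i) ^ 2 = 4 * δ * (δ * (u i) ^ 2) := by ring
      have h2 : 4 * δ * (δ * (u i) ^ 2) ≤ 4 * δ * D :=
        mul_le_mul_of_nonneg_left hui2 (by positivity)
      have h3 : 4 * δ * D ≤ ε ^ 2 := by nlinarith [hδval, hδ0]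
      linarith
    obtain ⟨hlo, hhi⟩ := sq_bound _ _ hε hz2
    linarith [hstat, hlo]
  · -- columns
    intro j
    set c : ℝ := (∑ j' ∈ univ.erase j, ∑ i, p i j' * Real.exp (u i + v j'))
        - (∑ i, u i) - ((m : ℝ) / n) * ∑ j' ∈ univ.erase j, v j'
        + δ * ((∑ i, (u i) ^ 2) + ∑ j' ∈ univ.erase j, (v j') ^ 2) with hc
    set g : ℝ → ℝ := fun s => (∑ i, p i j * Real.exp (u i + s))
        - ((m : ℝ) / n) * s + δ * s ^ 2 + c with hg
    have hsplit : ∀ (H : Fin n → ℝ → ℝ) (s : ℝ),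
        ∑ j', H j' (Function.update v j s j')
          = H j s + ∑ j' ∈ univ.erase j, H j' (v j') := by
      intro H s
      rw [← Finset.add_sum_erase univ (fun j' => H j' (Function.update v j s j')) (mem_univ j)]
      congr 1
      · rw [Function.update_self]
      · exact Finset.sum_congr rfl
          (fun j' hj' => by rw [Function.update_of_ne (Finset.ne_of_mem_erase hj')])
    have hgF : ∀ s, F (u, Function.update v j s) = g s := by
      intro s
      show (∑ i, ∑ j', p i j' * Real.exp (u i + Function.update v j s j'))
          - (∑ i, u i) - ((m : ℝ) / n) * ∑ j', Function.update v j s j'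
          + δ * ((∑ i, (u i) ^ 2) + ∑ j', (Function.update v j s j') ^ 2) = g s
      rw [Finset.sum_comm,
        hsplit (fun j' z => ∑ i, p i j' * Real.exp (u i + z)) s,
        hsplit (fun _ z => z) s, hsplit (fun _ z => z ^ 2) s, hg, hc]
      ring
    have hmin : ∀ s, g (v j) ≤ g s := by
      intro s
      have h0 : Function.update v j (v j) = v := Function.update_eq_self j v
      have h3 : g (v j) = F (u, v) := by rw [← hgF (v j), h0]
      rw [h3, ← hgF s]
      exact hzglob _
    have hloc : IsLocalMin g (v j) := Filter.Eventually.of_forall hmin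
    have hderiv : HasDerivAt g
        ((∑ i, p i j * Real.exp (u i + v j)) - (m : ℝ) / n + δ * (2 * v j)) (v j) := by
      have h1 : HasDerivAt (fun s => ∑ i, p i j * Real.exp (u i + s))
          (∑ i, p i j * Real.exp (u i + v j)) (v j) := by
        apply HasDerivAt.fun_sum
        intro i _
        have h2 : HasDerivAt (fun s : ℝ => u i + s) 1 (v j) := (hasDerivAt_id _).const_add _
        simpa using (h2.exp.const_mul (p i j))
      have h5 : HasDerivAt (fun s : ℝ => ((m : ℝ) / n) * s) ((m : ℝ) / n) (v j) := by
        simpa using (hasDerivAt_id (v j)).const_mul ((m : ℝ) / n)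
      have h6 : HasDerivAt (fun s : ℝ => s ^ 2) (2 * v j) (v j) := by
        simpa using hasDerivAt_pow 2 (v j)
      have h8 := ((h1.fun_sub h5).fun_add (h6.const_mul δ)).add_const c
      rw [hg]
      convert h8 using 2
    have hstat : (∑ i, p i j * Real.exp (u i + v j)) - (m : ℝ) / n + δ * (2 * v j) = 0 := by
      have hd0 := hloc.deriv_eq_zero
      rw [hderiv.deriv] at hd0
      exact hd0
    have hvj2 : δ * (v j) ^ 2 ≤ D := by
      have h1 : (v j) ^ 2 ≤ Q (u, v) := by
        rw [hQdef]
        have h2 : (v j) ^ 2 ≤ ∑ j', (v j') ^ 2 :=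
          Finset.single_le_sum (f := fun j' => v j' ^ 2) (fun _ _ => sq_nonneg _) (mem_univ j)
        have h3 : (0:ℝ) ≤ ∑ i, (u i) ^ 2 := by positivity
        linarith
      have h4 := mul_le_mul_of_nonneg_left h1 hδ0.le
      linarith [hzQ]
    have hz2 : (2 * δ * v j) ^ 2 ≤ ε ^ 2 := by
      have h1 : (2 * δ * v j) ^ 2 = 4 * δ * (δ * (v j) ^ 2) := by ring
      have h2 : 4 * δ * (δ * (v j) ^ 2) ≤ 4 * δ * D :=
        mul_le_mul_of_nonneg_left hvj2 (by positivity)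
      have h3 : 4 * δ * D ≤ ε ^ 2 := by nlinarith [hδval, hδ0]
      linarith
    obtain ⟨hlo, hhi⟩ := sq_bound _ _ hε hz2
    linarith [hstat, hhi]

/-- ℓ₂²-scaling: every complex matrix with Property-S admits, for each `ε > 0`,
a scaling with row square-sums at most `1 + ε` and column square-sums at least
`m/n - ε`. -/
theorem l2_scaling {m n : ℕ} (A : Matrix (Fin m) (Fin n) ℂ)
    (hA : PropertyS A) (ε : ℝ) (hε : 0 < ε) :
    ∃ (ρ : Fin m → ℝ) (γ : Fin n → ℝ), (∀ i, 0 < ρ i) ∧ (∀ j, 0 < γ j) ∧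
      (∀ i : Fin m, ∑ j : Fin n, ‖(ρ i : ℂ) * (γ j : ℂ) * A i j‖ ^ 2 ≤ 1 + ε) ∧
      (∀ j : Fin n, (m : ℝ) / n - ε ≤ ∑ i : Fin m, ‖(ρ i : ℂ) * (γ j : ℂ) * A i j‖ ^ 2) := by
  classical
  rcases Nat.eq_zero_or_pos m with hm | hm
  · subst hm
    refine ⟨fun _ => 1, fun _ => 1, fun i => one_pos, fun j => one_pos, fun i => i.elim0, ?_⟩
    intro j
    simp
    linarith
  rcases Nat.eq_zero_or_pos n with hn | hn
  · subst hn
    refine ⟨fun _ => 1, fun _ => 1, fun i => one_pos, fun j => one_pos, ?_, fun j => j.elim0⟩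
    intro i
    simp
    linarith
  set p : Fin m → Fin n → ℝ := fun i j => ‖A i j‖ ^ 2 with hp
  obtain ⟨B, hB0, hBsupp, hrow, hcol⟩ := exists_B hm hn A hA
  have hsupp : ∀ i j, p i j = 0 → B i j = 0 := by
    intro i j hpij
    apply hBsupp
    rw [hp] at hpij
    have h1 : ‖A i j‖ = 0 :=
      pow_eq_zero_iff (by norm_num) |>.mp hpij
    exact norm_eq_zero.mp h1
  obtain ⟨u, v, hrows, hcols⟩ := key p B (fun i j => by positivity) hB0 hsupp hrow hcol ε hε
  have e1 : ∀ t : ℝ, Real.exp (t / 2) ^ 2 = Real.exp t := by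
    intro t
    rw [sq, ← Real.exp_add]
    congr 1
    ring
  have habs : ∀ (i : Fin m) (j : Fin n),
      ‖(Real.exp (u i / 2) : ℂ) * (Real.exp (v j / 2) : ℂ) * A i j‖ ^ 2
        = p i j * Real.exp (u i + v j) := by
    intro i j
    rw [norm_mul, norm_mul, Complex.norm_real, Complex.norm_real, Real.norm_eq_abs, Real.norm_eq_abs,
      abs_of_pos (Real.exp_pos _), abs_of_pos (Real.exp_pos _), hp]
    rw [mul_pow, mul_pow, e1, e1, Real.exp_add]
    ring
  refine ⟨fun i => Real.exp (u i / 2), fun j => Real.exp (v j / 2),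
    fun i => Real.exp_pos _, fun j => Real.exp_pos _, ?_, ?_⟩
  · intro i
    calc ∑ j, ‖(Real.exp (u i / 2) : ℂ) * (Real.exp (v j / 2) : ℂ) * A i j‖ ^ 2
        = ∑ j, p i j * Real.exp (u i + v j) := Finset.sum_congr rfl (fun j _ => habs i j)
      _ ≤ 1 + ε := hrows i
  · intro j
    calc (m : ℝ) / n - ε ≤ ∑ i, p i j * Real.exp (u i + v j) := hcols j
      _ = ∑ i, ‖(Real.exp (u i / 2) : ℂ) * (Real.exp (v j / 2) : ℂ) * A i j‖ ^ 2 :=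
          Finset.sum_congr rfl (fun i _ => (habs i j).symm)
end

section
/- Transfer of rank bounds via Nullstellensatz: Let m, n, r be positive integers and T ⊆ [m]×[n]. If every complex m×n matrix whose support is exactly T (nonzero exactly at positions in T) has rank ≥ r, then there is an explicit bound P₀(n,m) such that over every field F of characteristic zero or characteristic p > P₀(n,m), every m×n T-matrix over F has rank ≥ r. -/
open Matrix Module

variable {K : Type*} [Field K]

/-- selecting rows and columns does not increase rank -/
lemma rank_submatrix_le_rank {m n r s : ℕ} (B : Matrix (Fin m) (Fin n) K)
    (ri : Fin r → Fin m) (ci : Fin s → Fin n) :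
    (B.submatrix ri ci).rank ≤ B.rank := by
  classical
  let P : Matrix (Fin r) (Fin m) K := Matrix.of fun i k => if ri i = k then 1 else 0
  let Q : Matrix (Fin n) (Fin s) K := Matrix.of fun k j => if ci j = k then 1 else 0
  have hPQ : P * B * Q = B.submatrix ri ci := by
    ext i j
    simp [P, Q, Matrix.mul_apply, Finset.sum_ite_eq, ite_and]
  calc (B.submatrix ri ci).rank = (P * B * Q).rank := by rw [hPQ]
    _ ≤ (P * B).rank := Matrix.rank_mul_le_left _ _
    _ ≤ B.rank := Matrix.rank_mul_le_right _ _

lemma exists_linearIndependent_cols {a b r : ℕ} (M : Matrix (Fin a) (Fin b) K)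
    (h : r ≤ M.rank) :
    ∃ c : Fin r → Fin b, LinearIndependent K (fun i => Mᵀ (c i)) := by
  classical
  obtain ⟨s, hst, hsp, hsl⟩ := exists_linearIndependent K (Set.range Mᵀ)
  have hfin : s.Finite := (Set.finite_range Mᵀ).subset hst
  have : Fintype s := hfin.fintype
  have hcard : r ≤ Fintype.card s := by
    have h1 : finrank K (Submodule.span K s) = s.toFinset.card :=
      finrank_span_set_eq_card hsl
    have h2 : r ≤ finrank K (Submodule.span K s) := by
      rw [hsp]; rw [Matrix.rank_eq_finrank_span_cols] at h; exact h
    rw [Set.toFinset_card] at h1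
    omega
  let g : Fin r → s := fun i => (Fintype.equivFin s).symm (Fin.castLE hcard i)
  have hginj : Function.Injective g := by
    intro i j hij
    have := (Fintype.equivFin s).symm.injective hij
    exact Fin.castLE_injective _ this
  have hrange : ∀ i, (g i : Fin a → K) ∈ Set.range Mᵀ := fun i => hst (g i).2
  choose c hc using hrange
  refine ⟨c, ?_⟩
  have : (fun i : Fin r => Mᵀ (c i)) = (fun x : s => (x : Fin a → K)) ∘ g := by
    funext i; simp [hc]
  rw [this]
  exact hsl.comp g hginj

theorem le_rank_iff_minor {m n r : ℕ} (B : Matrix (Fin m) (Fin n) K) :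
    r ≤ B.rank ↔ ∃ (ri : Fin r → Fin m) (ci : Fin r → Fin n),
      (B.submatrix ri ci).det ≠ 0 := by
  constructor
  · intro h
    obtain ⟨ci, hci⟩ := exists_linearIndependent_cols B h
    let M1 : Matrix (Fin r) (Fin m) K := Matrix.of fun i k => Bᵀ (ci i) k
    have hM1 : M1.rank = r := by
      have := hci.rank_matrix (M := M1)
      simpa using this
    obtain ⟨ri, hri⟩ := exists_linearIndependent_cols M1 (le_of_eq hM1.symm)
    refine ⟨ri, ci, ?_⟩
    have hsub : B.submatrix ri ci = Matrix.of fun a b => M1ᵀ (ri a) b := by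
      ext a b; simp [M1, Matrix.submatrix_apply]
    have hunit : IsUnit (B.submatrix ri ci) := by
      rw [hsub]
      exact Matrix.linearIndependent_rows_iff_isUnit.1 hri
    have := (Matrix.isUnit_iff_isUnit_det _).1 hunit
    exact this.ne_zero
  · rintro ⟨ri, ci, hdet⟩
    have hunit : IsUnit (B.submatrix ri ci) :=
      (Matrix.isUnit_iff_isUnit_det _).2 (isUnit_iff_ne_zero.2 hdet)
    have h1 : (B.submatrix ri ci).rank = r := by
      simpa using Matrix.rank_of_isUnit _ hunit
    calc r = (B.submatrix ri ci).rank := h1.symm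
      _ ≤ B.rank := rank_submatrix_le_rank B ri ci

open Matrix Module FirstOrder FirstOrder.Ring Language

/-- the determinant of the generic `r × r` submatrix with rows `ri` and columns `ci`,
as an element of the free commutative ring on `Fin m × Fin n`. -/
noncomputable def minorPoly {m n : ℕ} (r : ℕ) (ri : Fin r → Fin m) (ci : Fin r → Fin n) :
    FreeCommRing (Fin m × Fin n) :=
  (Matrix.of fun a b : Fin r => FreeCommRing.of (ri a, ci b)).det

/-- the sentence saying: every matrix with support exactly `T` has a nonzero `r × r` minor. -/
noncomputable def minorSentence (m n r : ℕ) (T : Finset (Fin m × Fin n)) :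
    Language.ring.Sentence :=
  Formula.iAlls (Fin m × Fin n) <| Formula.relabel (Sum.inr : Fin m × Fin n → Empty ⊕ (Fin m × Fin n))
    ((BoundedFormula.iInf (fun ij : Fin m × Fin n =>
        if ij ∈ T then ((Term.var (Sum.inl ij) =' 0).not : Language.ring.Formula (Fin m × Fin n))
        else (Term.var (Sum.inl ij) =' 0))).imp
      (BoundedFormula.iSup
        (fun rc : (Fin r → Fin m) × (Fin r → Fin n) =>
          (((termOfFreeCommRing (minorPoly r rc.1 rc.2)).relabel Sum.inl =' 0).not :
            Language.ring.Formula (Fin m × Fin n)))))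

theorem realize_minorSentence {K : Type*} [Field K] [CompatibleRing K]
    {m n r : ℕ} (T : Finset (Fin m × Fin n)) :
    K ⊨ minorSentence m n r T ↔
      ∀ A : Matrix (Fin m) (Fin n) K, (∀ i j, A i j ≠ 0 ↔ (i, j) ∈ T) →
        ∃ (ri : Fin r → Fin m) (ci : Fin r → Fin n), (A.submatrix ri ci).det ≠ 0 := by
  have hdet : ∀ (v : Fin m × Fin n → K) (ri : Fin r → Fin m) (ci : Fin r → Fin n),
      FreeCommRing.lift v (minorPoly r ri ci) =
        ((Matrix.of fun i j => v (i, j)).submatrix ri ci).det := by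
    intro v ri ci
    rw [minorPoly, RingHom.map_det]
    congr 1
    ext a b
    simp
  constructor
  · intro h A hA
    have := h
    rw [minorSentence, Sentence.Realize, Formula.realize_iAlls] at this
    simp only [Formula.realize_relabel, Function.comp_def, Sum.elim_inr] at this
    have h2 := this (fun ij => A ij.1 ij.2)
    rw [Formula.Realize, BoundedFormula.realize_imp] at h2
    rw [BoundedFormula.realize_iInf] at h2
    rw [BoundedFormula.realize_iSup] at h2
    have h3 := h2 ?_
    · obtain ⟨rc, hrc⟩ := h3
      refine ⟨rc.1, rc.2, ?_⟩
      rw [BoundedFormula.realize_not, BoundedFormula.realize_bdEqual] at hrc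
      simp only [Term.realize_relabel, realize_termOfFreeCommRing] at hrc
      rw [hdet] at hrc
      rw [realize_zero] at hrc
      exact hrc
    · intro ij
      by_cases hij : ij ∈ T
      · simp only [if_pos hij, BoundedFormula.realize_not, BoundedFormula.realize_bdEqual]
        intro hc
        apply (hA ij.1 ij.2).2 hij
        rw [realize_zero] at hc
        simpa using hc
      · simp only [if_neg hij, BoundedFormula.realize_bdEqual]
        have : A ij.1 ij.2 = 0 := by
          by_contra hne
          exact hij ((hA ij.1 ij.2).1 hne)
        simpa [Term.realize] using this
  · intro h
    rw [minorSentence, Sentence.Realize, Formula.realize_iAlls]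
    simp only [Formula.realize_relabel, Function.comp_def, Sum.elim_inr]
    intro v
    rw [Formula.Realize, BoundedFormula.realize_imp, BoundedFormula.realize_iInf,
      BoundedFormula.realize_iSup]
    intro hsupp
    have hA : ∀ i j, (Matrix.of fun i j => v (i, j)) i j ≠ 0 ↔ (i, j) ∈ T := by
      intro i j
      have := hsupp (i, j)
      by_cases hij : (i, j) ∈ T
      · simp only [if_pos hij, BoundedFormula.realize_not, BoundedFormula.realize_bdEqual] at this
        simp only [Matrix.of_apply]
        constructor
        · intro _; exact hij
        · intro _ hc; exact this (by simpa [Term.realize] using hc)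
      · simp only [if_neg hij, BoundedFormula.realize_bdEqual] at this
        simp only [Matrix.of_apply]
        constructor
        · intro hc; rw [realize_zero] at this; exact absurd (by simpa using this) hc
        · intro hc; exact absurd hc hij
    obtain ⟨ri, ci, hdet0⟩ := h _ hA
    refine ⟨(ri, ci), ?_⟩
    rw [BoundedFormula.realize_not, BoundedFormula.realize_bdEqual]
    simp only [Term.realize_relabel, realize_termOfFreeCommRing]
    rw [hdet, realize_zero]
    intro hc
    apply hdet0
    exact hc

open scoped Classical in
/-- a bound beyond which every prime characteristic models `φ`, provided `ACF 0` does. -/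
noncomputable def sentenceBound (φ : Language.ring.Sentence) : ℕ :=
  if h : Theory.ACF 0 ⊨ᵇ φ then
    ((FirstOrder.Field.finite_ACF_prime_not_realize_of_ACF_zero_realize φ h).toFinset.sup
      fun p => (p : ℕ))
  else 0

theorem ACF_models_of_sentenceBound_lt {φ : Language.ring.Sentence}
    (h : Theory.ACF 0 ⊨ᵇ φ) {p : ℕ} (hp : p.Prime) (hlt : sentenceBound φ < p) :
    Theory.ACF p ⊨ᵇ φ := by
  classical
  by_contra hcon
  have hmem : (⟨p, hp⟩ : Nat.Primes) ∈
      (FirstOrder.Field.finite_ACF_prime_not_realize_of_ACF_zero_realize φ h).toFinset := by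
    exact (Set.Finite.mem_toFinset _).2 hcon
  have h2 : p ≤ _ := Finset.le_sup (f := fun q : Nat.Primes => (q : ℕ)) hmem
  rw [sentenceBound, dif_pos h] at hlt
  omega

/-- Transfer of rank bounds via the Nullstellensatz: there is a bound `P₀(n, m)` such
that whenever every complex `m × n` matrix with support exactly `T` has rank at least
`r`, the same holds over every field of characteristic zero or of characteristic
greater than `P₀(n, m)`. -/
theorem rank_bound_transfer :
    ∃ P₀ : ℕ → ℕ → ℕ, ∀ (m n r : ℕ) (T : Set (Fin m × Fin n)),
      (∀ A : Matrix (Fin m) (Fin n) ℂ, (∀ i j, A i j ≠ 0 ↔ (i, j) ∈ T) → r ≤ A.rank) →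
      ∀ (F : Type) [Field F], (ringChar F = 0 ∨ P₀ n m < ringChar F) →
        ∀ B : Matrix (Fin m) (Fin n) F, (∀ i j, B i j ≠ 0 ↔ (i, j) ∈ T) → r ≤ B.rank := by
  classical
  refine ⟨fun n m => (Finset.range (m + 1)).sup fun r =>
    (Finset.univ : Finset (Finset (Fin m × Fin n))).sup fun t =>
      sentenceBound (minorSentence m n r t), ?_⟩
  intro m n r T hC F _ hchar B hB
  by_cases hrm : r ≤ m
  swap
  · exfalso
    set A0 : Matrix (Fin m) (Fin n) ℂ := Matrix.of fun i j => if (i, j) ∈ T then 1 else 0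
      with hA0
    have hsupp : ∀ i j, A0 i j ≠ 0 ↔ (i, j) ∈ T := by
      intro i j; by_cases h : (i, j) ∈ T <;> simp [hA0, h]
    have hA := hC A0 hsupp
    have hle := Matrix.rank_le_card_height A0
    simp only [Fintype.card_fin] at hle
    omega
  set t : Finset (Fin m × Fin n) := Finset.univ.filter (· ∈ T) with ht
  have htT : ∀ ij : Fin m × Fin n, ij ∈ t ↔ ij ∈ T := by simp [ht]
  let _ := compatibleRingOfRing ℂ
  have hℂ : ℂ ⊨ minorSentence m n r t := by
    rw [realize_minorSentence]
    intro A hA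
    exact (le_rank_iff_minor A).1 (hC A fun i j => (hA i j).trans (htT (i, j)))
  have hACF0 : Theory.ACF 0 ⊨ᵇ minorSentence m n r t := by
    have := (FirstOrder.Field.ACF_isComplete (Or.inr rfl)).realize_sentence_iff
      (minorSentence m n r t) ℂ
    rwa [this] at hℂ
  have hbound : sentenceBound (minorSentence m n r t) ≤
      (Finset.range (m + 1)).sup fun r =>
        (Finset.univ : Finset (Finset (Fin m × Fin n))).sup fun t =>
          sentenceBound (minorSentence m n r t) := by
    have h1 : sentenceBound (minorSentence m n r t) ≤
        (Finset.univ : Finset (Finset (Fin m × Fin n))).sup fun t =>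
          sentenceBound (minorSentence m n r t) :=
      Finset.le_sup (f := fun t' => sentenceBound (minorSentence m n r t')) (Finset.mem_univ t)
    have h2 : ((Finset.univ : Finset (Finset (Fin m × Fin n))).sup fun t =>
          sentenceBound (minorSentence m n r t)) ≤
        (Finset.range (m + 1)).sup fun r =>
          (Finset.univ : Finset (Finset (Fin m × Fin n))).sup fun t =>
            sentenceBound (minorSentence m n r t) :=
      Finset.le_sup (f := fun r => (Finset.univ : Finset (Finset (Fin m × Fin n))).sup fun t =>
        sentenceBound (minorSentence m n r t)) (Finset.mem_range.2 (Nat.lt_succ_of_le hrm))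
    exact le_trans h1 h2
  set K := AlgebraicClosure F with hK
  let f := algebraMap F K
  have hinj : Function.Injective f := f.injective
  set p := ringChar F with hp
  have hcharF : CharP F p := ringChar.charP F
  have hcharK : CharP K p := charP_of_injective_ringHom hinj p
  let _ := compatibleRingOfRing K
  have hKφ : K ⊨ minorSentence m n r t := by
    rcases hchar with h0 | hlt
    · have hcharK0 : CharP K 0 := h0 ▸ hcharK
      exact hACF0.realize_sentence K
    · have hp0 : p ≠ 0 := by omega
      have hpprime : p.Prime := (CharP.char_is_prime_or_zero F p).resolve_right hp0
      have hACFp : Theory.ACF p ⊨ᵇ minorSentence m n r t :=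
        ACF_models_of_sentenceBound_lt hACF0 hpprime (lt_of_le_of_lt hbound hlt)
      exact hACFp.realize_sentence K
  rw [realize_minorSentence] at hKφ
  have hsuppB : ∀ i j, (B.map f) i j ≠ 0 ↔ (i, j) ∈ t := by
    intro i j
    rw [htT (i, j), ← hB i j]
    simp only [Matrix.map_apply]
    constructor
    · intro hne h0
      exact hne (by rw [h0, map_zero])
    · intro hne h0
      exact hne (hinj (by rw [h0, map_zero]))
  obtain ⟨ri, ci, hd⟩ := hKφ (B.map f) hsuppB
  refine (le_rank_iff_minor B).2 ⟨ri, ci, ?_⟩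
  intro h0
  apply hd
  rw [show (B.map f).submatrix ri ci = f.mapMatrix (B.submatrix ri ci) from rfl,
    ← RingHom.map_det, h0, map_zero]
end
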